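/- arXiv:2203.16889 — 6 statements merged into one kernel-verified Lean document; each statement's English description precedes it below -/
import Mathlib

section
/- Let n ∈ ℕ, t, λ ∈ ℂ, and let p be a monic polynomial of degree n over ℂ satisfying p''(x) + (2x² + t)·p'(x) − 2n·x·p(x) = λ·p(x) for all x ∈ ℂ. Then for all 0 ≤ j ≤ n and k ∈ {1,3,5} the ray integrals I_k(x ↦ x^j·p(x)·exp(2θ(x;t))) converge, and there exist κ, κ̃ ∈ ℂ, not both zero, such that for every j with 0 ≤ j ≤ n: κ·[I₃ − I₁](x ↦ x^j·p(x)·e^{2θ(x;t)}) + κ̃·[I₃ − I₅](x ↦ x^j·p(x)·e^{2θ(x;t)}) = 0. That is, p is a 1-degenerate orthogonal polynomial with respect to the weight e^{2θ(x;t)} on the contour Γ = κ·γ + κ̃·γ̃: it is orthogonal to all powers x⁰, x¹, …, xⁿ, including the n-th power. -/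
/-- Direction at infinity of argument kπ/3. -/
noncomputable def rayDir (k : ℕ) : ℂ := Complex.exp ((k : ℂ) * Real.pi * Complex.I / 3)

/-- Ray integral I_k(f) = ω_k · ∫₀^∞ f(r·ω_k) dr. -/
noncomputable def rayIntegral (k : ℕ) (f : ℂ → ℂ) : ℂ :=
  rayDir k * ∫ r in Set.Ioi (0 : ℝ), f ((r : ℂ) * rayDir k)

open MeasureTheory Set Filter Polynomial Complex
open scoped Topology

lemma rayDir_cube {k : ℕ} (hk : Odd k) : rayDir k ^ 3 = -1 := by
  rw [rayDir, ← Complex.exp_nat_mul]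
  have : (3 : ℕ) * ((k : ℂ) * Real.pi * Complex.I / 3) = (k : ℕ) * (Real.pi * Complex.I) := by
    push_cast; ring
  rw [this, Complex.exp_nat_mul, Complex.exp_pi_mul_I, hk.neg_one_pow]

lemma rayDir_norm (k : ℕ) : ‖rayDir k‖ = 1 := by
  rw [rayDir, Complex.norm_exp]
  norm_num [Complex.div_re, Complex.mul_re, Complex.mul_im]

noncomputable def wt (t : ℂ) (x : ℂ) : ℂ := Complex.exp (2 * (x ^ 3 / 3 + t * x / 2))

lemma norm_wt (t ω : ℂ) (hω3 : ω ^ 3 = -1) (r : ℝ) :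
    ‖wt t ((r : ℂ) * ω)‖ = Real.exp ((t * ω).re * r - 2 / 3 * r ^ 3) := by
  rw [wt, Complex.norm_exp]
  congr 1
  have h : (2 : ℂ) * (((r : ℂ) * ω) ^ 3 / 3 + t * ((r : ℂ) * ω) / 2)
      = (t * ω) * (r : ℂ) - (2 / 3 : ℝ) * (r : ℂ) ^ 3 := by
    rw [mul_pow, hω3]; push_cast; ring
  rw [h]
  simp [Complex.sub_re, Complex.mul_re, ← Complex.ofReal_pow]

lemma eval_norm_le (q : Polynomial ℂ) (ω : ℂ) (hω : ‖ω‖ = 1) {r : ℝ} (hr : 0 ≤ r) :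
    ‖q.eval ((r : ℂ) * ω)‖ ≤ (∑ i ∈ Finset.range (q.natDegree + 1), ‖q.coeff i‖) *
      Real.exp (q.natDegree * r) := by
  rw [Polynomial.eval_eq_sum_range]
  refine le_trans (norm_sum_le _ _) ?_
  rw [Finset.sum_mul]
  refine Finset.sum_le_sum fun i hi => ?_
  rw [norm_mul, norm_pow, norm_mul, Complex.norm_real, hω, mul_one, Real.norm_eq_abs,
    _root_.abs_of_nonneg hr]
  refine mul_le_mul_of_nonneg_left ?_ (norm_nonneg _)
  have h1 : r ≤ Real.exp r := by linarith [Real.add_one_le_exp r]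
  calc r ^ i ≤ (Real.exp r) ^ i := pow_le_pow_left₀ hr h1 i
    _ = Real.exp (i * r) := by rw [← Real.exp_nat_mul]
    _ ≤ Real.exp (q.natDegree * r) := by
        apply Real.exp_le_exp.mpr
        have : i ≤ q.natDegree := Nat.lt_succ_iff.mp (Finset.mem_range.mp hi)
        exact mul_le_mul_of_nonneg_right (by exact_mod_cast this) hr

lemma tendsto_aux (C K : ℝ) :
    Tendsto (fun r : ℝ => C * Real.exp (K * r - 2 / 3 * r ^ 3)) atTop (𝓝 0) := by
  have h1 : Tendsto (fun r : ℝ => K * r - 2 / 3 * r ^ 3) atTop atBot := by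
    have he : (fun r : ℝ => K * r - 2 / 3 * r ^ 3) = fun r => r * (K - 2 / 3 * r ^ 2) := by
      funext r; ring
    rw [he]
    apply Filter.Tendsto.atTop_mul_atBot₀ tendsto_id
    apply Filter.tendsto_atBot_add_const_left
    apply Filter.tendsto_neg_atTop_atBot.comp
    exact (tendsto_pow_atTop two_ne_zero).const_mul_atTop (by norm_num)
  have h2 : Tendsto (fun r : ℝ => Real.exp (K * r - 2 / 3 * r ^ 3)) atTop (𝓝 0) :=
    Real.tendsto_exp_atBot.comp h1
  simpa using h2.const_mul C

lemma main_bound (t ω : ℂ) (hω3 : ω ^ 3 = -1) (hω1 : ‖ω‖ = 1) (q : Polynomial ℂ) {r : ℝ}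
    (hr : 0 ≤ r) :
    ‖q.eval ((r : ℂ) * ω) * wt t ((r : ℂ) * ω)‖ ≤
      (∑ i ∈ Finset.range (q.natDegree + 1), ‖q.coeff i‖) *
        Real.exp ((q.natDegree + (t * ω).re) * r - 2 / 3 * r ^ 3) := by
  rw [norm_mul, norm_wt t ω hω3]
  calc ‖q.eval ((r : ℂ) * ω)‖ * Real.exp ((t * ω).re * r - 2 / 3 * r ^ 3)
      ≤ ((∑ i ∈ Finset.range (q.natDegree + 1), ‖q.coeff i‖) * Real.exp (q.natDegree * r)) *
        Real.exp ((t * ω).re * r - 2 / 3 * r ^ 3) :=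
        mul_le_mul_of_nonneg_right (eval_norm_le q ω hω1 hr) (Real.exp_pos _).le
    _ = _ := by rw [mul_assoc, ← Real.exp_add]; ring_nf

lemma cont_main (t ω : ℂ) (q : Polynomial ℂ) :
    Continuous (fun r : ℝ => q.eval ((r : ℂ) * ω) * wt t ((r : ℂ) * ω)) := by
  have h : Continuous (fun r : ℝ => (r : ℂ) * ω) := Complex.continuous_ofReal.mul continuous_const
  exact (q.continuous.comp h).mul ((Complex.continuous_exp.comp (by continuity)))

lemma tendsto_main (t ω : ℂ) (hω3 : ω ^ 3 = -1) (hω1 : ‖ω‖ = 1) (q : Polynomial ℂ) :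
    Tendsto (fun r : ℝ => q.eval ((r : ℂ) * ω) * wt t ((r : ℂ) * ω)) atTop (𝓝 0) := by
  apply squeeze_zero_norm' _ (tendsto_aux (∑ i ∈ Finset.range (q.natDegree + 1), ‖q.coeff i‖)
    (q.natDegree + (t * ω).re))
  filter_upwards [eventually_ge_atTop (0 : ℝ)] with r hr
  exact main_bound t ω hω3 hω1 q hr

lemma integrable_main (t ω : ℂ) (hω3 : ω ^ 3 = -1) (hω1 : ‖ω‖ = 1) (q : Polynomial ℂ) :
    IntegrableOn (fun r : ℝ => q.eval ((r : ℂ) * ω) * wt t ((r : ℂ) * ω)) (Ioi 0) := by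
  set C := ∑ i ∈ Finset.range (q.natDegree + 1), ‖q.coeff i‖ with hC
  set K := (q.natDegree : ℝ) + (t * ω).re + 1 with hK
  have ho : (fun r : ℝ => q.eval ((r : ℂ) * ω) * wt t ((r : ℂ) * ω)) =O[atTop]
      fun r => Real.exp (-1 * r) := by
    rw [Asymptotics.isBigO_iff]
    refine ⟨1, ?_⟩
    have hev := (tendsto_aux C K).eventually_le_const (by norm_num : (0:ℝ) < 1)
    filter_upwards [eventually_ge_atTop (0 : ℝ), hev] with r hr hle
    have hb := main_bound t ω hω3 hω1 q hr
    have hsplit : Real.exp ((q.natDegree + (t * ω).re) * r - 2 / 3 * r ^ 3)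
        = Real.exp (K * r - 2 / 3 * r ^ 3) * Real.exp (-1 * r) := by
      rw [← Real.exp_add]; congr 1; rw [hK]; ring
    rw [hsplit, ← mul_assoc] at hb
    refine hb.trans ?_
    rw [one_mul, Real.norm_eq_abs, _root_.abs_of_pos (Real.exp_pos _), ← hC]
    calc C * Real.exp (K * r - 2 / 3 * r ^ 3) * Real.exp (-1 * r)
        ≤ 1 * Real.exp (-1 * r) := mul_le_mul_of_nonneg_right hle (Real.exp_pos _).le
      _ = Real.exp (-1 * r) := one_mul _
  refine (integrableOn_Ici_iff_integrableOn_Ioi enorm_ne_top).mp ?_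
  exact ((cont_main t ω q).continuousOn.locallyIntegrableOn measurableSet_Ici
    ).integrableOn_of_isBigO_atTop ho ⟨Ioi 0, Ioi_mem_atTop 0, exp_neg_integrableOn_Ioi 0 one_pos⟩

lemma hasDerivAt_main (t : ℂ) (q : Polynomial ℂ) (x : ℂ) :
    HasDerivAt (fun x => q.eval x * wt t x)
      ((q.derivative + (C 2 * X ^ 2 + C t) * q).eval x * wt t x) x := by
  have hu : HasDerivAt (fun x : ℂ => 2 * (x ^ 3 / 3 + t * x / 2)) (2 * x ^ 2 + t) x := by
    have h := (((hasDerivAt_pow 3 x).div_const 3).add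
      (((hasDerivAt_id x).const_mul t).div_const 2)).const_mul 2
    refine h.congr_deriv ?_
    rw [show (3:ℕ) - 1 = 2 from rfl]; push_cast; ring
  have hw : HasDerivAt (wt t) ((2 * x ^ 2 + t) * wt t x) x := by
    have := hu.cexp
    exact this.congr_deriv (by rw [mul_comm]; rfl)
  have h2 := (q.hasDerivAt x).mul hw
  refine h2.congr_deriv ?_
  simp [wt]
  ring

lemma ftc_main (t ω : ℂ) (hω3 : ω ^ 3 = -1) (hω1 : ‖ω‖ = 1) (q : Polynomial ℂ) :
    ω * ∫ r in Ioi (0:ℝ), (q.derivative + (C 2 * X ^ 2 + C t) * q).eval ((r : ℂ) * ω)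
      * wt t ((r : ℂ) * ω) = - q.eval 0 := by
  set D := q.derivative + (C 2 * X ^ 2 + C t) * q with hD
  have hint : IntegrableOn (fun r : ℝ => ω * (D.eval ((r : ℂ) * ω) * wt t ((r : ℂ) * ω)))
      (Ioi 0) := (integrable_main t ω hω3 hω1 D).const_mul ω
  have hderiv : ∀ r ∈ Ici (0:ℝ), HasDerivAt (fun r : ℝ => q.eval ((r : ℂ) * ω) * wt t ((r : ℂ) * ω))
      (ω * (D.eval ((r : ℂ) * ω) * wt t ((r : ℂ) * ω))) r := by
    intro r _
    have h1 : HasDerivAt (fun r : ℝ => (r : ℂ) * ω) ω r := by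
      simpa using (Complex.ofRealCLM.hasDerivAt (x := r)).mul_const ω
    have h2 := (hasDerivAt_main t q ((r : ℂ) * ω)).scomp r h1
    exact h2.congr_deriv (by simp [hD, smul_eq_mul])
  have key := integral_Ioi_of_hasDerivAt_of_tendsto' hderiv hint (tendsto_main t ω hω3 hω1 q)
  rw [MeasureTheory.integral_const_mul] at key
  rw [key]
  simp [wt]

lemma induction_main (n : ℕ) (t lam : ℂ) (p : Polynomial ℂ)
    (hode : derivative (derivative p) + (C 2 * X ^ 2 + C t) * derivative p
      = (C 2 * C (n : ℂ) * X + C lam) * p)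
    (M : Polynomial ℂ → ℂ)
    (Madd : ∀ q1 q2, M (q1 + q2) = M q1 + M q2)
    (Mmul : ∀ c q, M (C c * q) = c * M q)
    (Mkey : ∀ q, M (derivative q + (C 2 * X ^ 2 + C t) * q) = 0)
    (Mp : M p = 0) : ∀ j ≤ n, M (X ^ j * p) = 0 := by
  set ν : ℕ → ℂ := fun j => M (X ^ j * p) with hν
  set π : ℕ → ℂ := fun j => M (X ^ j * derivative p) with hπ
  have expand : ∀ (c1 c2 c3 c4 : ℂ) (q1 q2 q3 q4 : Polynomial ℂ),
      M (C c1 * q1 + C c2 * q2 + C c3 * q3 + C c4 * q4)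
        = c1 * M q1 + c2 * M q2 + c3 * M q3 + c4 * M q4 := by
    intros c1 c2 c3 c4 q1 q2 q3 q4
    rw [Madd, Madd, Madd, Mmul, Mmul, Mmul, Mmul]
  have expand3 : ∀ (c1 c2 c3 : ℂ) (q1 q2 q3 : Polynomial ℂ),
      M (C c1 * q1 + C c2 * q2 + C c3 * q3) = c1 * M q1 + c2 * M q2 + c3 * M q3 := by
    intros; rw [Madd, Madd, Mmul, Mmul, Mmul]
  have hν0 : ν 0 = 0 := by
    have : X ^ 0 * p = p := by rw [pow_zero, one_mul]
    rw [hν]; simp only [this]; exact Mp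
  have rec0 : π 0 + 2 * ν 2 + t * ν 0 = 0 := by
    have h := Mkey p
    have harg : derivative p + (C 2 * X ^ 2 + C t) * p
        = C 1 * (X ^ 0 * derivative p) + C 2 * (X ^ 2 * p) + C t * (X ^ 0 * p) := by
      simp; ring
    rw [harg, expand3] at h
    rw [hν, hπ]; simp only; linear_combination h
  have rec1 : 2 * (n : ℂ) * ν 1 + lam * ν 0 = 0 := by
    have h := Mkey (derivative p)
    have harg : derivative (derivative p) + (C 2 * X ^ 2 + C t) * derivative p
        = C (2 * (n : ℂ)) * (X ^ 1 * p) + C lam * (X ^ 0 * p) + C 0 * (X ^ 0 * p) := by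
      rw [hode]; simp [C_mul]; ring
    rw [harg, expand3] at h
    rw [hν]; simp only; linear_combination h
  have rec2 : ∀ j : ℕ, ((j : ℂ) + 1) * π j + 2 * (n : ℂ) * ν (j + 2) + lam * ν (j + 1) = 0 := by
    intro j
    have h := Mkey (X ^ (j + 1) * derivative p)
    have harg : derivative (X ^ (j + 1) * derivative p)
          + (C 2 * X ^ 2 + C t) * (X ^ (j + 1) * derivative p)
        = C ((j : ℂ) + 1) * (X ^ j * derivative p) + C (2 * (n : ℂ)) * (X ^ (j + 2) * p)
          + C lam * (X ^ (j + 1) * p) := by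
      rw [derivative_mul, derivative_X_pow]
      push_cast
      simp only [C_mul]
      linear_combination (X : Polynomial ℂ) ^ (j + 1) * hode
    rw [harg, expand3] at h
    rw [hν, hπ]; simp only; linear_combination h
  have rec3 : ∀ j : ℕ, ((j : ℂ) + 1) * ν j + π (j + 1) + 2 * ν (j + 3) + t * ν (j + 1) = 0 := by
    intro j
    have h := Mkey (X ^ (j + 1) * p)
    have harg : derivative (X ^ (j + 1) * p) + (C 2 * X ^ 2 + C t) * (X ^ (j + 1) * p)
        = C ((j : ℂ) + 1) * (X ^ j * p) + C 1 * (X ^ (j + 1) * derivative p)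
          + C 2 * (X ^ (j + 3) * p) + C t * (X ^ (j + 1) * p) := by
      rw [derivative_mul, derivative_X_pow]
      push_cast
      simp only [map_one]
      ring
    rw [harg, expand] at h
    rw [hν, hπ]; simp only; linear_combination h
  intro j
  induction j using Nat.strong_induction_on with
  | _ j ih =>
    match j with
    | 0 => exact fun _ => hν0
    | 1 =>
      intro h1
      have hn : (2 * (n : ℂ)) ≠ 0 := by
        have : (n : ℂ) ≠ 0 := Nat.cast_ne_zero.mpr (by omega)
        simpa using this
      show ν 1 = 0
      have h := rec1
      rw [hν0, mul_zero, add_zero] at h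
      exact (mul_eq_zero.mp h).resolve_left hn
    | 2 =>
      intro h2
      have hν1 : ν 1 = 0 := ih 1 (by omega) (by omega)
      show ν 2 = 0
      have h1 := rec2 0
      have h2' := rec0
      norm_num at h1
      rw [hν1] at h1
      rw [hν0] at h2'
      have hfin : (2 * (n : ℂ) - 2) * ν 2 = 0 := by push_cast at h1 h2' ⊢; linear_combination h1 - h2'
      have hn : (2 * (n : ℂ) - 2) ≠ 0 := by
        have : (n : ℂ) ≠ 1 := by exact_mod_cast (by omega : n ≠ 1)
        intro hc; apply this; linear_combination hc / 2
      exact (mul_eq_zero.mp hfin).resolve_left hn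
    | (j + 3) =>
      intro hle
      have h0 : ν j = 0 := ih j (by omega) (by omega)
      have h1 : ν (j + 1) = 0 := ih (j + 1) (by omega) (by omega)
      have h2 : ν (j + 2) = 0 := ih (j + 2) (by omega) (by omega)
      show ν (j + 3) = 0
      have ha := rec3 j
      have hb := rec2 (j + 1)
      have e1 : j + 1 + 2 = j + 3 := rfl
      have e2 : j + 1 + 1 = j + 2 := rfl
      rw [e1, e2] at hb
      rw [h0, h1] at ha
      rw [h2] at hb
      have hfin : (2 * (n : ℂ) - 2 * ((j : ℂ) + 2)) * ν (j + 3) = 0 := by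
        push_cast at ha hb ⊢
        linear_combination hb - ((j : ℂ) + 2) * ha
      have hn : (2 * (n : ℂ) - 2 * ((j : ℂ) + 2)) ≠ 0 := by
        have : (n : ℂ) ≠ ((j : ℂ) + 2) := by
          exact_mod_cast (by omega : n ≠ j + 2)
        intro hc; apply this; linear_combination hc / 2
      exact (mul_eq_zero.mp hfin).resolve_left hn

noncomputable def Lfun (t ω : ℂ) (q : Polynomial ℂ) : ℂ :=
  ω * ∫ r in Ioi (0:ℝ), q.eval ((r : ℂ) * ω) * wt t ((r : ℂ) * ω)

lemma Lfun_add (t ω : ℂ) (hω3 : ω ^ 3 = -1) (hω1 : ‖ω‖ = 1) (q1 q2 : Polynomial ℂ) :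
    Lfun t ω (q1 + q2) = Lfun t ω q1 + Lfun t ω q2 := by
  rw [Lfun, Lfun, Lfun, ← mul_add, ← MeasureTheory.integral_add
    (integrable_main t ω hω3 hω1 q1) (integrable_main t ω hω3 hω1 q2)]
  congr 1
  apply MeasureTheory.integral_congr_ae
  filter_upwards with r
  simp [eval_add]
  ring

lemma Lfun_Cmul (t ω : ℂ) (c : ℂ) (q : Polynomial ℂ) :
    Lfun t ω (C c * q) = c * Lfun t ω q := by
  rw [Lfun, Lfun]
  have h : ∀ r : ℝ, (C c * q).eval ((r : ℂ) * ω) * wt t ((r : ℂ) * ω)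
      = c * (q.eval ((r : ℂ) * ω) * wt t ((r : ℂ) * ω)) := by
    intro r; simp [eval_mul]; ring
  simp only [h, MeasureTheory.integral_const_mul]
  ring

lemma Lfun_key (t ω : ℂ) (hω3 : ω ^ 3 = -1) (hω1 : ‖ω‖ = 1) (q : Polynomial ℂ) :
    Lfun t ω (q.derivative + (C 2 * X ^ 2 + C t) * q) = - q.eval 0 :=
  ftc_main t ω hω3 hω1 q

/-- a quasi-polynomial eigenfunction yields a 1-degenerate orthogonal
polynomial: the ray integrals converge, and there exist κ, κ̃, not both zero, such that
p is orthogonal to all powers x⁰,…,xⁿ with weight e^{2θ(x;t)} on Γ = κ·γ + κ̃·γ̃. -/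
theorem quasipolynomial_is_degenerate_orthogonal
    (n : ℕ) (t lam : ℂ) (p : Polynomial ℂ) (hmonic : p.Monic) (hdeg : p.natDegree = n)
    (heq : ∀ x : ℂ, (p.derivative.derivative).eval x
        + (2 * x ^ 2 + t) * p.derivative.eval x
        - 2 * (n : ℂ) * x * p.eval x = lam * p.eval x) :
    (∀ j ≤ n, ∀ k ∈ ({1, 3, 5} : Set ℕ),
      MeasureTheory.IntegrableOn
        (fun r : ℝ => ((r : ℂ) * rayDir k) ^ j * p.eval ((r : ℂ) * rayDir k) *
          Complex.exp (2 * (((r : ℂ) * rayDir k) ^ 3 / 3 + t * ((r : ℂ) * rayDir k) / 2)))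
        (Set.Ioi 0)) ∧
    ∃ κ κ' : ℂ, (κ ≠ 0 ∨ κ' ≠ 0) ∧ ∀ j ≤ n,
      κ * (rayIntegral 3 (fun x => x ^ j * p.eval x * Complex.exp (2 * (x ^ 3 / 3 + t * x / 2)))
          - rayIntegral 1 (fun x => x ^ j * p.eval x * Complex.exp (2 * (x ^ 3 / 3 + t * x / 2))))
      + κ' * (rayIntegral 3 (fun x => x ^ j * p.eval x * Complex.exp (2 * (x ^ 3 / 3 + t * x / 2)))
          - rayIntegral 5 (fun x => x ^ j * p.eval x * Complex.exp (2 * (x ^ 3 / 3 + t * x / 2))))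
      = 0 := by
  have h1o : Odd 1 := ⟨0, rfl⟩
  have h3o : Odd 3 := ⟨1, rfl⟩
  have h5o : Odd 5 := ⟨2, rfl⟩
  have hode : derivative (derivative p) + (C 2 * X ^ 2 + C t) * derivative p
      = (C 2 * C (n : ℂ) * X + C lam) * p := by
    apply Polynomial.funext
    intro x
    simp only [eval_add, eval_mul, eval_pow, eval_X, eval_C]
    linear_combination heq x
  constructor
  · intro j hj k hk
    have hodd : Odd k := by
      rcases hk with rfl | rfl | rfl <;> decide
    have := integrable_main t (rayDir k) (rayDir_cube hodd) (rayDir_norm k) (X ^ j * p)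
    simpa only [eval_mul, eval_pow, eval_X, wt] using this
  · set a := Lfun t (rayDir 3) p - Lfun t (rayDir 1) p with ha
    set b := Lfun t (rayDir 3) p - Lfun t (rayDir 5) p with hb
    obtain ⟨κ, κ', hnz, hzero⟩ : ∃ κ κ' : ℂ, (κ ≠ 0 ∨ κ' ≠ 0) ∧ κ * a + κ' * b = 0 := by
      by_cases h : b = 0
      · exact ⟨0, 1, Or.inr one_ne_zero, by simp [h]⟩
      · exact ⟨b, -a, Or.inl h, by ring⟩
    refine ⟨κ, κ', hnz, ?_⟩
    set M : Polynomial ℂ → ℂ := fun q =>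
      κ * (Lfun t (rayDir 3) q - Lfun t (rayDir 1) q)
      + κ' * (Lfun t (rayDir 3) q - Lfun t (rayDir 5) q) with hM
    have Madd : ∀ q1 q2, M (q1 + q2) = M q1 + M q2 := by
      intro q1 q2
      simp only [hM]
      rw [Lfun_add t _ (rayDir_cube h3o) (rayDir_norm 3),
          Lfun_add t _ (rayDir_cube h1o) (rayDir_norm 1),
          Lfun_add t _ (rayDir_cube h5o) (rayDir_norm 5)]
      ring
    have Mmul : ∀ c q, M (C c * q) = c * M q := by
      intro c q
      simp only [hM, Lfun_Cmul]
      ring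
    have Mkey : ∀ q, M (derivative q + (C 2 * X ^ 2 + C t) * q) = 0 := by
      intro q
      simp only [hM, Lfun_key t _ (rayDir_cube h3o) (rayDir_norm 3),
        Lfun_key t _ (rayDir_cube h1o) (rayDir_norm 1),
        Lfun_key t _ (rayDir_cube h5o) (rayDir_norm 5)]
      ring
    have Mp : M p = 0 := by
      simp only [hM]
      rw [← ha, ← hb]
      exact hzero
    have hmain := induction_main n t lam p hode M Madd Mmul Mkey Mp
    intro j hj
    have hj0 := hmain j hj
    have hray : ∀ k : ℕ, rayIntegral k (fun x => x ^ j * p.eval x *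
        Complex.exp (2 * (x ^ 3 / 3 + t * x / 2))) = Lfun t (rayDir k) (X ^ j * p) := by
      intro k
      simp only [rayIntegral, Lfun, eval_mul, eval_pow, eval_X, wt]
    rw [hray, hray, hray]
    simp only [hM] at hj0
    exact hj0
end

section
/- Let x₀ ∈ ℂ and let U be an open neighbourhood of x₀. Let V be holomorphic on U ∖ {x₀} and have a pole of order at most 2 at x₀, i.e. the function x ↦ (x − x₀)²·V(x) extends holomorphically to all of U. Suppose y₁, y₂ : ℂ → ℂ are holomorphic on U, satisfy yᵢ''(x) = V(x)·yᵢ(x) for all x ∈ U ∖ {x₀} (i = 1, 2), and are linearly independent in the sense that their Wronskian satisfies y₁(x₀)·y₂'(x₀) − y₁'(x₀)·y₂(x₀) ≠ 0. Then V extends holomorphically to all of U; in particular V is analytic at x₀ (the apparent singularity is removable). -/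
lemma aux_removable
    (x₀ : ℂ) (U : Set ℂ) (hU : IsOpen U) (hx₀ : x₀ ∈ U)
    (V y : ℂ → ℂ)
    (hV : DifferentiableOn ℂ V (U \ {x₀}))
    (hy : DifferentiableOn ℂ y U)
    (hode : ∀ x ∈ U \ {x₀}, deriv (deriv y) x = V x * y x)
    (hy0 : y x₀ ≠ 0) :
    ∃ Vext : ℂ → ℂ, DifferentiableOn ℂ Vext U ∧ ∀ x ∈ U \ {x₀}, Vext x = V x := by
  have hUopen : IsOpen (U \ {x₀}) := hU.sdiff isClosed_singleton
  have hyan : AnalyticOnNhd ℂ y U := hy.analyticOnNhd hU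
  have hddy : DifferentiableOn ℂ (deriv (deriv y)) U :=
    (hyan.deriv.deriv).differentiableOn
  -- find a ball where y ≠ 0 and contained in U
  have hcont : ContinuousAt y x₀ :=
    (hy.differentiableAt (hU.mem_nhds hx₀)).continuousAt
  have hev : ∀ᶠ x in nhds x₀, x ∈ U ∧ y x ≠ 0 := by
    filter_upwards [hU.mem_nhds hx₀, hcont.eventually_ne hy0] with x h1 h2
    exact ⟨h1, h2⟩
  obtain ⟨r, hr, hball⟩ := Metric.eventually_nhds_iff_ball.mp hev
  classical
  set H : ℂ → ℂ := fun x => deriv (deriv y) x / y x with hH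
  set Vext : ℂ → ℂ := fun x => if x ∈ Metric.ball x₀ r then H x else V x with hVext
  have key : ∀ x ∈ U \ {x₀}, Vext x = V x := by
    intro x hx
    by_cases hxb : x ∈ Metric.ball x₀ r
    · simp only [Vext, hH, if_pos hxb]
      rw [hode x hx]
      exact mul_div_cancel_right₀ _ (hball x hxb).2
    · simp only [Vext, if_neg hxb]
  refine ⟨Vext, ?_, key⟩
  intro x hx
  by_cases hxe : x = x₀
  · subst hxe
    have hHd : DifferentiableAt ℂ H x :=
      (hddy.differentiableAt (hU.mem_nhds hx)).div
        (hy.differentiableAt (hU.mem_nhds hx)) hy0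
    have heq : Vext =ᶠ[nhds x] H := by
      filter_upwards [Metric.ball_mem_nhds x hr] with z hz
      simp only [Vext, if_pos hz]
    exact (hHd.congr_of_eventuallyEq heq).differentiableWithinAt
  · have hmem : x ∈ U \ {x₀} := ⟨hx, hxe⟩
    have hVd : DifferentiableAt ℂ V x := hV.differentiableAt (hUopen.mem_nhds hmem)
    have heq : Vext =ᶠ[nhds x] V := by
      filter_upwards [hUopen.mem_nhds hmem] with z hz using key z hz
    exact (hVd.congr_of_eventuallyEq heq).differentiableWithinAt

/-- an apparent singularity of y'' = V·y where V has a pole of order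
at most 2 is removable: V extends holomorphically. -/
theorem apparent_singularity_removable
    (x₀ : ℂ) (U : Set ℂ) (hU : IsOpen U) (hx₀ : x₀ ∈ U)
    (V y₁ y₂ : ℂ → ℂ)
    (hV : DifferentiableOn ℂ V (U \ {x₀}))
    (hpole : ∃ W : ℂ → ℂ, DifferentiableOn ℂ W U ∧
      ∀ x ∈ U \ {x₀}, W x = (x - x₀) ^ 2 * V x)
    (hy₁ : DifferentiableOn ℂ y₁ U)
    (hode₁ : ∀ x ∈ U \ {x₀}, deriv (deriv y₁) x = V x * y₁ x)
    (hy₂ : DifferentiableOn ℂ y₂ U)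
    (hode₂ : ∀ x ∈ U \ {x₀}, deriv (deriv y₂) x = V x * y₂ x)
    (hWr : y₁ x₀ * deriv y₂ x₀ - deriv y₁ x₀ * y₂ x₀ ≠ 0) :
    ∃ Vext : ℂ → ℂ, DifferentiableOn ℂ Vext U ∧ ∀ x ∈ U \ {x₀}, Vext x = V x := by
  by_cases h1 : y₁ x₀ ≠ 0
  · exact aux_removable x₀ U hU hx₀ V y₁ hV hy₁ hode₁ h1
  · have h2 : y₂ x₀ ≠ 0 := by
      intro h2
      push_neg at h1
      apply hWr
      rw [h1, h2]; ring
    exact aux_removable x₀ U hU hx₀ V y₂ hV hy₂ hode₂ h2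
end

section
/- Let n ≥ 1, t ∈ ℂ, and let x₁, …, xₙ be distinct complex numbers; set p(x) := ∏_{j=1}^{n} (x − x_j) and F(x) := p(x)·exp(θ(x;t)). Then F''(x) = (x⁴ + t·x² + 2(n+1)·x + Λ)·F(x) holds for all x ∈ ℂ with Λ := t²/4 + 2·∑_{j=1}^{n} x_j, if and only if the points satisfy the Fekete-type equilibrium equations θ'(x_j;t) = ∑_{k ≠ j} 1/(x_k − x_j), i.e. x_j² + t/2 = ∑_{k ≠ j} 1/(x_k − x_j), for every j = 1, …, n. -/
open Polynomial Finset

private lemma deriv_poly_exp (t : ℂ) (A : ℂ[X]) :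
    deriv (fun w : ℂ => A.eval w * Complex.exp (w ^ 3 / 3 + t * w / 2))
      = fun w => (derivative A + (X ^ 2 + C (t / 2)) * A).eval w
          * Complex.exp (w ^ 3 / 3 + t * w / 2) := by
  funext w
  have h2 : HasDerivAt (fun w : ℂ => w ^ 3 / 3 + t * w / 2) (w ^ 2 + t / 2) w := by
    have h := ((hasDerivAt_pow 3 w).div_const 3).add
      (((hasDerivAt_id w).const_mul t).div_const 2)
    exact h.congr_deriv (by push_cast; ring)
  have h3 : HasDerivAt (fun w : ℂ => Complex.exp (w ^ 3 / 3 + t * w / 2))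
      (Complex.exp (w ^ 3 / 3 + t * w / 2) * (w ^ 2 + t / 2)) w :=
    (Complex.hasDerivAt_exp _).comp w h2
  have h := (A.hasDerivAt w).mul h3
  rw [show (fun w : ℂ => A.eval w * Complex.exp (w ^ 3 / 3 + t * w / 2))
      = (fun x => A.eval x) * (fun w : ℂ => Complex.exp (w ^ 3 / 3 + t * w / 2)) from rfl,
    h.deriv]
  simp only [eval_add, eval_mul, eval_pow, eval_X, eval_C]
  ring

private lemma eval_derivative_prod_X_sub_C {ι : Type*} [DecidableEq ι] (s : Finset ι)
    (f : ι → ℂ) (r : ℂ) (hr : ∀ i ∈ s, r - f i ≠ 0) :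
    (derivative (∏ i ∈ s, (X - C (f i)))).eval r
      = (∑ i ∈ s, 1 / (r - f i)) * ∏ i ∈ s, (r - f i) := by
  classical
  induction s using Finset.induction with
  | empty => simp
  | @insert a s ha ih =>
    have hra : r - f a ≠ 0 := hr a (Finset.mem_insert_self a s)
    rw [Finset.prod_insert ha, derivative_mul, eval_add, eval_mul, eval_mul,
      ih (fun i hi => hr i (Finset.mem_insert_of_mem hi)), Finset.sum_insert ha,
      Finset.prod_insert ha]
    simp only [derivative_sub, derivative_X, derivative_C, sub_zero, eval_one, eval_sub,
      eval_X, eval_C, eval_prod]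
    field_simp

/-- for p(x) = ∏(x − x_j) with distinct roots, F = p·e^θ solves the
quartic oscillator ODE with Λ = t²/4 + 2∑x_j iff the roots satisfy the Fekete-type
equilibrium equations x_j² + t/2 = ∑_{k≠j} 1/(x_k − x_j). -/
theorem quasipolynomial_iff_fekete
    (n : ℕ) (hn : 1 ≤ n) (t : ℂ) (x : Fin n → ℂ) (hx : Function.Injective x) :
    (∀ z : ℂ,
      deriv (deriv (fun w => (∏ j, (w - x j)) * Complex.exp (w ^ 3 / 3 + t * w / 2))) z
        = (z ^ 4 + t * z ^ 2 + 2 * ((n : ℂ) + 1) * z + (t ^ 2 / 4 + 2 * ∑ j, x j))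
          * ((∏ j, (z - x j)) * Complex.exp (z ^ 3 / 3 + t * z / 2))) ↔
    (∀ j : Fin n, (x j) ^ 2 + t / 2 = ∑ k ∈ Finset.univ.erase j, 1 / (x k - x j)) := by
  classical
  obtain ⟨m, rfl⟩ : ∃ m, n = m + 1 := ⟨n - 1, by omega⟩
  set s : ℂ := ∑ j, x j with hs
  set P : ℂ[X] := ∏ j, (X - C (x j)) with hP
  set Θ : ℂ[X] := X ^ 2 + C (t / 2) with hΘ
  set A : ℂ[X] := derivative (derivative P + Θ * P) + Θ * (derivative P + Θ * P) with hA
  set B : ℂ[X] := (X ^ 4 + C t * X ^ 2 + C (2 * ((m : ℂ) + 1 + 1)) * X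
      + C ((t / 2) * (t / 2) + 2 * s)) * P with hB
  set Q : ℂ[X] := derivative (derivative P) + C 2 * (X ^ 2 * derivative P)
      + C t * derivative P - (C (2 * ((m : ℂ) + 1)) * (X * P) + C (2 * s) * P) with hQ
  have hPeval : ∀ w : ℂ, P.eval w = ∏ j, (w - x j) := by
    intro w; simp [hP, eval_prod]
  have hFP : (fun w : ℂ => (∏ j, (w - x j)) * Complex.exp (w ^ 3 / 3 + t * w / 2))
      = fun w => P.eval w * Complex.exp (w ^ 3 / 3 + t * w / 2) := by
    funext w; rw [hPeval]
  have hderiv2 : deriv (deriv (fun w : ℂ =>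
      (∏ j, (w - x j)) * Complex.exp (w ^ 3 / 3 + t * w / 2)))
      = fun z => A.eval z * Complex.exp (z ^ 3 / 3 + t * z / 2) := by
    rw [hFP, deriv_poly_exp, deriv_poly_exp]
  have hABQ : A - B = Q := by
    have h1 : (C t : ℂ[X]) = 2 * C (t / 2) := by
      rw [← map_ofNat (C : ℂ →+* ℂ[X]) 2, ← C_mul]
      congr 1
      ring
    rw [hA, hB, hQ, hΘ]
    simp only [derivative_add, derivative_mul, derivative_pow, derivative_X, derivative_C,
      map_mul, map_add, map_ofNat, map_natCast, map_one, C_1, Nat.cast_ofNat]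
    rw [h1]
    push_cast
    ring
  -- the ODE is equivalent to Q = 0
  have hODE : (∀ z : ℂ,
      deriv (deriv (fun w => (∏ j, (w - x j)) * Complex.exp (w ^ 3 / 3 + t * w / 2))) z
        = (z ^ 4 + t * z ^ 2 + 2 * (((m + 1 : ℕ) : ℂ) + 1) * z + (t ^ 2 / 4 + 2 * ∑ j, x j))
          * ((∏ j, (z - x j)) * Complex.exp (z ^ 3 / 3 + t * z / 2))) ↔ Q = 0 := by
    have hBev : ∀ z : ℂ, B.eval z
        = (z ^ 4 + t * z ^ 2 + 2 * (((m + 1 : ℕ) : ℂ) + 1) * z + (t ^ 2 / 4 + 2 * ∑ j, x j))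
          * P.eval z := by
      intro z
      simp only [hB, eval_mul, eval_add, eval_pow, eval_X, eval_C]
      rw [hs]
      push_cast
      ring_nf
    constructor
    · intro h
      rw [← hABQ, sub_eq_zero]
      apply Polynomial.funext
      intro z
      have hz := h z
      rw [hderiv2] at hz
      rw [← hPeval z] at hz
      have hE : Complex.exp (z ^ 3 / 3 + t * z / 2) ≠ 0 := Complex.exp_ne_zero _
      refine mul_right_cancel₀ hE ?_
      rw [hBev z]
      linear_combination hz
    · intro h
      intro z
      have hAB : A = B := by rw [← sub_eq_zero, hABQ, h]
      rw [hderiv2]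
      beta_reduce
      rw [hAB, ← hPeval z, hBev z]
      push_cast
      ring
  rw [hODE]
  -- key: Q.eval (x j) = 0 ↔ equilibrium at j
  have hkey : ∀ j : Fin (m + 1),
      (Q.eval (x j) = 0 ↔ (x j) ^ 2 + t / 2 = ∑ k ∈ Finset.univ.erase j, 1 / (x k - x j)) := by
    intro j
    set q : ℂ[X] := ∏ k ∈ Finset.univ.erase j, (X - C (x k)) with hq
    have hfac : P = (X - C (x j)) * q := by
      rw [hP, hq, ← Finset.mul_prod_erase _ _ (Finset.mem_univ j)]
    have hne : ∀ k ∈ Finset.univ.erase j, x j - x k ≠ 0 := by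
      intro k hk
      have : k ≠ j := (Finset.mem_erase.mp hk).1
      exact sub_ne_zero.mpr fun h => this (hx h.symm)
    have hqx : q.eval (x j) = ∏ k ∈ Finset.univ.erase j, (x j - x k) := by
      simp [hq, eval_prod]
    have hq0 : q.eval (x j) ≠ 0 := by
      rw [hqx]
      exact Finset.prod_ne_zero_iff.mpr hne
    have hdq : (derivative q).eval (x j)
        = (∑ k ∈ Finset.univ.erase j, 1 / (x j - x k)) * q.eval (x j) := by
      rw [hq, hqx]
      exact eval_derivative_prod_X_sub_C _ _ _ hne
    have hQe : Q.eval (x j) = 2 * ((derivative q).eval (x j)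
        + ((x j) ^ 2 + t / 2) * q.eval (x j)) := by
      have hd1 : derivative P = q + (X - C (x j)) * derivative q := by
        rw [hfac]; simp [derivative_mul]
      have hd2 : derivative (derivative P)
          = C 2 * derivative q + (X - C (x j)) * derivative (derivative q) := by
        rw [hd1]
        simp only [derivative_add, derivative_mul, derivative_sub, derivative_X,
          derivative_C, sub_zero]
        rw [show ((C 2 : ℂ[X])) = 2 from map_ofNat _ 2]
        ring
      rw [hQ, hd2, hd1, hfac]
      simp only [eval_add, eval_mul, eval_sub, eval_pow, eval_X, eval_C, sub_self,
        zero_mul, mul_zero, add_zero, eval_ofNat]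
      ring
    have hsum : ∑ k ∈ Finset.univ.erase j, 1 / (x j - x k)
        = -∑ k ∈ Finset.univ.erase j, 1 / (x k - x j) := by
      rw [← Finset.sum_neg_distrib]
      apply Finset.sum_congr rfl
      intro k hk
      rw [one_div, one_div, ← neg_sub (x k) (x j), inv_neg]
    constructor
    · intro h0
      rw [hQe, hdq, hsum] at h0
      have h1 : ((x j) ^ 2 + t / 2 - ∑ k ∈ Finset.univ.erase j, 1 / (x k - x j))
          * q.eval (x j) = 0 := by linear_combination h0 / 2
      rcases mul_eq_zero.mp h1 with h2 | h2
      · exact sub_eq_zero.mp h2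
      · exact absurd h2 hq0
    · intro hEq
      rw [hQe, hdq, hsum, ← hEq]
      ring
  constructor
  · intro h j
    exact (hkey j).mp (by rw [h]; simp)
  · intro h
    have heval : ∀ j, Q.eval (x j) = 0 := fun j => (hkey j).mpr (h j)
    -- degree bound
    have hdeg : Q.natDegree < m + 1 := by
      have hPmonic : P.Monic := monic_prod_of_monic _ _ fun i _ => monic_X_sub_C _
      have hPdeg : P.natDegree = m + 1 := by
        rw [hP, natDegree_prod _ _ fun i _ => X_sub_C_ne_zero (x i)]
        simp
      have hc0 : P.coeff (m + 1) = 1 := by rw [← hPdeg]; exact hPmonic.coeff_natDegree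
      have hc1 : P.coeff m = -s := by
        have h := prod_X_sub_C_nextCoeff (s := (Finset.univ : Finset (Fin (m + 1)))) x
        rw [← hP, nextCoeff, hPdeg] at h
        simpa [hs] using h
      have hch : ∀ k, m + 1 < k → P.coeff k = 0 := fun k hk =>
        coeff_eq_zero_of_natDegree_lt (by rw [hPdeg]; omega)
      by_cases hQ0 : Q = 0
      · rw [hQ0]; simp
      rw [natDegree_lt_iff_degree_lt hQ0, degree_lt_iff_coeff_zero]
      intro k hk
      rw [hQ, show (X : ℂ[X]) * P = X ^ 1 * P from by ring]
      simp only [coeff_add, coeff_sub, coeff_C_mul, coeff_derivative, coeff_X_pow_mul']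
      rcases Nat.lt_or_ge k (m + 3) with hk3 | hk3
      · have hk' : k = m + 1 ∨ k = m + 2 := by omega
        rcases hk' with rfl | rfl
        · -- k = m + 1
          by_cases h2 : 2 ≤ m + 1
          · have e1 : m + 1 - 2 + 1 = m := by omega
            have e2 : ((m + 1 - 2 : ℕ) : ℂ) + 1 = (m : ℂ) := by
              have e3 : m + 1 - 2 = m - 1 := by omega
              rw [e3, Nat.cast_sub (by omega : 1 ≤ m)]
              push_cast
              ring
            rw [if_pos h2, e1, e2, if_pos (by omega : 1 ≤ m + 1), Nat.add_sub_cancel,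
              hc1, hc0, hch (m + 1 + 1 + 1) (by omega), hch (m + 1 + 1) (by omega)]
            push_cast
            ring
          · obtain rfl : m = 0 := by omega
            rw [if_neg h2, if_pos (by norm_num : 1 ≤ 0 + 1), Nat.add_sub_cancel,
              hc1, hc0, hch (0 + 1 + 1 + 1) (by omega), hch (0 + 1 + 1) (by omega)]
            push_cast
            ring
        · -- k = m + 2
          rw [if_pos (by omega : 2 ≤ m + 2), if_pos (by omega : 1 ≤ m + 2)]
          have e1 : m + 2 - 2 = m := by omega
          have e2 : m + 2 - 1 = m + 1 := by omega
          rw [e1, e2, hc0, hch (m + 2 + 1 + 1) (by omega), hch (m + 2 + 1) (by omega),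
            hch (m + 2) (by omega)]
          push_cast
          ring
      · rw [if_pos (by omega : 2 ≤ k), if_pos (by omega : 1 ≤ k),
          hch (k + 1 + 1) (by omega), hch (k - 2 + 1) (by omega), hch (k + 1) (by omega),
          hch (k - 1) (by omega), hch k (by omega)]
        ring
    have := Polynomial.eq_zero_of_natDegree_lt_card_of_eval_eq_zero Q hx heval
      (by simpa using hdeg)
    exact this
end

section
/- Let t, J, Λ ∈ ℂ and let p be a nonzero polynomial over ℂ such that F(x) := p(x)·exp(θ(x;t)) satisfies F''(x) = (x⁴ + t·x² + 2J·x + Λ)·F(x) for all x ∈ ℂ. Then every root of p is simple, i.e. p is squarefree. -/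
open Polynomial

/-- if F = p·e^θ solves the quartic anharmonic oscillator ODE, then
all roots of p are simple, i.e. p is squarefree. -/
theorem quasipolynomial_roots_simple
    (t J Λ : ℂ) (p : Polynomial ℂ) (hp : p ≠ 0)
    (hode : ∀ x : ℂ,
      deriv (deriv (fun w => p.eval w * Complex.exp (w ^ 3 / 3 + t * w / 2))) x
        = (x ^ 4 + t * x ^ 2 + 2 * J * x + Λ)
          * (p.eval x * Complex.exp (x ^ 3 / 3 + t * x / 2))) :
    Squarefree p := by
  -- derivative of the exponent
  have hθd : ∀ x : ℂ, HasDerivAt (fun w : ℂ => w ^ 3 / 3 + t * w / 2) (x ^ 2 + t / 2) x := by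
    intro x
    have h1 : HasDerivAt (fun w : ℂ => w ^ 3 / 3) (x ^ 2) x := by
      have := (hasDerivAt_pow 3 x).div_const 3
      refine this.congr_deriv ?_
      norm_num
    have h2 : HasDerivAt (fun w : ℂ => t * w / 2) (t / 2) x := by
      simpa using ((hasDerivAt_id x).const_mul t).div_const 2
    exact h1.add h2
  set A : Polynomial ℂ := X ^ 2 + C (t / 2) with hA
  set D : Polynomial ℂ → Polynomial ℂ := fun r => derivative r + r * A with hD
  have key : ∀ (r : Polynomial ℂ) (x : ℂ),
      HasDerivAt (fun w => r.eval w * Complex.exp (w ^ 3 / 3 + t * w / 2))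
        ((D r).eval x * Complex.exp (x ^ 3 / 3 + t * x / 2)) x := by
    intro r x
    have h := (r.hasDerivAt x).mul ((hθd x).cexp)
    refine h.congr_deriv ?_
    simp [hD, hA]
    ring
  have hd1 : deriv (fun w => p.eval w * Complex.exp (w ^ 3 / 3 + t * w / 2))
      = fun x => (D p).eval x * Complex.exp (x ^ 3 / 3 + t * x / 2) :=
    funext fun x => (key p x).deriv
  have hd2 : ∀ x : ℂ, deriv (deriv (fun w => p.eval w * Complex.exp (w ^ 3 / 3 + t * w / 2))) x
      = (D (D p)).eval x * Complex.exp (x ^ 3 / 3 + t * x / 2) := by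
    intro x
    rw [hd1]
    exact (key (D p) x).deriv
  set Q : Polynomial ℂ := X ^ 4 + C t * X ^ 2 + C (2 * J) * X + C Λ with hQ
  have hpoly : D (D p) = Q * p := by
    apply Polynomial.funext
    intro x
    have h := hode x
    rw [hd2 x] at h
    have he : Complex.exp (x ^ 3 / 3 + t * x / 2) ≠ 0 := Complex.exp_ne_zero _
    have h2 : (D (D p)).eval x * Complex.exp (x ^ 3 / 3 + t * x / 2)
        = ((Q * p).eval x) * Complex.exp (x ^ 3 / 3 + t * x / 2) := by
      rw [h]
      simp only [hQ, Polynomial.eval_mul, Polynomial.eval_add, Polynomial.eval_pow,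
        Polynomial.eval_C, Polynomial.eval_X]
      ring
    exact mul_right_cancel₀ he h2
  -- polynomial second-order relation
  have hA' : derivative A = 2 * X := by
    simp [hA]
    exact one_add_one_eq_two
  have hpp : derivative (derivative p)
      = (-2 * A) * derivative p + (Q - 2 * X - A ^ 2) * p := by
    have h := hpoly
    simp only [hD, derivative_add, derivative_mul, hA'] at h
    linear_combination h
  -- now the squarefree argument
  intro q hq
  by_contra hqu
  -- q is not a unit, q ≠ 0
  have hq0 : q ≠ 0 := by
    rintro rfl
    exact hp (zero_dvd_iff.mp (by simpa using hq))
  have hdeg : 0 < q.degree := by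
    rcases lt_or_ge 0 q.degree with h | h
    · exact h
    · exact absurd (Polynomial.isUnit_iff_degree_eq_zero.mpr
        (le_antisymm h (Polynomial.zero_le_degree_iff.mpr hq0))) hqu
  obtain ⟨z, hz⟩ := Complex.exists_root hdeg
  have hzq : (X - C z) ∣ q := Polynomial.dvd_iff_isRoot.mpr hz
  have hsq : (X - C z) ^ 2 ∣ p := by
    calc (X - C z) ^ 2 = (X - C z) * (X - C z) := sq (X - C z)
    _ ∣ q * q := mul_dvd_mul hzq hzq
    _ ∣ p := hq
  set m := p.rootMultiplicity z with hm
  have hm2 : 2 ≤ m := (Polynomial.le_rootMultiplicity_iff hp).mpr hsq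
  -- degrees
  have hdegp : 2 ≤ p.natDegree := by
    have := Polynomial.natDegree_le_of_dvd hsq hp
    simpa [Polynomial.natDegree_pow] using this
  have hzp : p.IsRoot z := by
    have : (X - C z) ∣ p := dvd_trans (dvd_pow_self _ two_ne_zero) hsq
    exact Polynomial.dvd_iff_isRoot.mp this
  have hmul' : (derivative p).rootMultiplicity z = m - 1 :=
    Polynomial.derivative_rootMultiplicity_of_root hzp
  have hp' : derivative p ≠ 0 := by
    intro h
    have : p.natDegree = 0 := Polynomial.natDegree_eq_zero_of_derivative_eq_zero h
    omega
  have hnd' : m - 1 ≤ (derivative p).natDegree := by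
    have hdvd' : (X - C z) ^ (m - 1) ∣ derivative p := by
      have := Polynomial.pow_rootMultiplicity_dvd (derivative p) z
      rwa [hmul'] at this
    have := Polynomial.natDegree_le_of_dvd hdvd' hp'
    simpa [Polynomial.natDegree_pow] using this
  have hp'' : derivative (derivative p) ≠ 0 := by
    intro h
    have h1 : (derivative p).natDegree = 0 :=
      Polynomial.natDegree_eq_zero_of_derivative_eq_zero h
    omega
  have hzp' : (derivative p).IsRoot z := by
    have : 0 < (derivative p).rootMultiplicity z := by omega
    exact (Polynomial.rootMultiplicity_pos hp').mp this
  have hmul'' : (derivative (derivative p)).rootMultiplicity z = m - 2 := by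
    rw [Polynomial.derivative_rootMultiplicity_of_root hzp', hmul']
    omega
  -- but (X - z)^(m-1) divides p''
  have hdvd : (X - C z) ^ (m - 1) ∣ derivative (derivative p) := by
    rw [hpp]
    apply dvd_add
    · have h1 : (X - C z) ^ (m - 1) ∣ derivative p := by
        have := Polynomial.pow_rootMultiplicity_dvd (derivative p) z
        rwa [hmul'] at this
      exact h1.mul_left _
    · have h2 : (X - C z) ^ (m - 1) ∣ p :=
        dvd_trans (pow_dvd_pow _ (by omega : m - 1 ≤ m))
          (Polynomial.pow_rootMultiplicity_dvd p z)
      exact h2.mul_left _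
  have hle : m - 1 ≤ m - 2 := by
    have := (Polynomial.le_rootMultiplicity_iff hp'').mpr hdvd
    omega
  omega
end

section
/- Let n ∈ ℕ, t, λ ∈ ℂ, and let p be a monic polynomial of degree n over ℂ satisfying p''(x) + (2x² + t)·p'(x) − 2n·x·p(x) = λ·p(x) for all x ∈ ℂ. Set F(x) := p(x)·exp(θ(x;t)) and assume the repeated-eigenvalue condition I₁(F²) = I₃(F²) = I₅(F²). Then the antiderivative of F² is again a quasi-polynomial: there exists a polynomial q over ℂ such that q'(x) + (2x² + t)·q(x) = p(x)² for all x ∈ ℂ, equivalently the derivative of x ↦ q(x)·e^{2θ(x;t)} equals p(x)²·e^{2θ(x;t)} for all x ∈ ℂ. -/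
open MeasureTheory Filter Set Polynomial Complex

namespace QP

/-- core tendsto: r^i * exp(-2r^3/3 + c r) → 0 -/
lemma core_tendsto (i : ℕ) (c : ℝ) :
    Tendsto (fun r : ℝ => r ^ i * Real.exp (-2 * r ^ 3 / 3 + c * r)) atTop (nhds 0) := by
  have h1 : Tendsto (fun r : ℝ => r ^ i * Real.exp (-r)) atTop (nhds 0) :=
    Real.tendsto_pow_mul_exp_neg_atTop_nhds_zero i
  apply squeeze_zero'
  · filter_upwards [eventually_ge_atTop (0:ℝ)] with r hr
    positivity
  · filter_upwards [eventually_ge_atTop (max 1 (3 * (|c| + 1)))] with r hr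
    have hr1 : (1:ℝ) ≤ r := le_trans (le_max_left _ _) hr
    have hr2 : 3 * (|c| + 1) ≤ r := le_trans (le_max_right _ _) hr
    have hexp : -2 * r ^ 3 / 3 + c * r ≤ -r := by
      have habs : c * r ≤ |c| * r := by
        apply mul_le_mul_of_nonneg_right (le_abs_self c) (by linarith)
      nlinarith [abs_nonneg c, sq_nonneg r, sq_nonneg (r - 1)]
    have := Real.exp_le_exp.2 hexp
    have hp : (0:ℝ) ≤ r ^ i := by positivity
    exact mul_le_mul_of_nonneg_left this hp
  · exact h1

lemma core_integrable (i : ℕ) (c : ℝ) :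
    IntegrableOn (fun r : ℝ => r ^ i * Real.exp (-2 * r ^ 3 / 3 + c * r)) (Ioi 0) := by
  apply integrable_of_isBigO_exp_neg (one_pos) (Continuous.continuousOn (by continuity))
  rw [Asymptotics.isBigO_iff]
  refine ⟨1, ?_⟩
  have ht := core_tendsto i (c + 1)
  have h2 : ∀ᶠ r : ℝ in atTop, |r ^ i * Real.exp (-2 * r ^ 3 / 3 + (c+1) * r)| ≤ 1 := by
    have := ht.eventually (eventually_le_nhds (by norm_num : (0:ℝ) < 1))
    filter_upwards [this, eventually_ge_atTop (0:ℝ)] with r h hr0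
    rwa [_root_.abs_of_nonneg (by positivity)]
  filter_upwards [h2, eventually_ge_atTop (0:ℝ)] with r h hr0
  have : r ^ i * Real.exp (-2 * r ^ 3 / 3 + c * r) =
      (r ^ i * Real.exp (-2 * r ^ 3 / 3 + (c+1) * r)) * Real.exp (-1 * r) := by
    rw [mul_assoc, ← Real.exp_add]; ring_nf
  rw [this, norm_mul]
  calc ‖r ^ i * Real.exp (-2 * r ^ 3 / 3 + (c+1) * r)‖ * ‖Real.exp (-1*r)‖
      ≤ 1 * ‖Real.exp (-1*r)‖ := by
        apply mul_le_mul_of_nonneg_right _ (norm_nonneg _)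
        rw [Real.norm_eq_abs]; exact h
    _ = 1 * ‖Real.exp (-1*r)‖ := rfl

end QP

namespace QP

variable {ω t : ℂ}

lemma norm_om (hω : ω ^ 3 = -1) : ‖ω‖ = 1 := by
  have h : ‖ω‖ ^ 3 = 1 := by rw [← norm_pow, hω]; simp
  nlinarith [norm_nonneg ω, sq_nonneg (‖ω‖ - 1), sq_nonneg (‖ω‖ + 1)]

lemma exp_arg_eq (hω : ω ^ 3 = -1) (r : ℝ) :
    2 * (((r:ℂ) * ω) ^ 3 / 3 + t * ((r:ℂ) * ω) / 2)
      = ((-2 * r ^ 3 / 3 : ℝ) : ℂ) + (r : ℂ) * (t * ω) := by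
  have : ((r:ℂ) * ω) ^ 3 = (r:ℂ)^3 * ω^3 := by ring
  rw [this, hω]
  push_cast
  ring

lemma norm_exp_eq (hω : ω ^ 3 = -1) (r : ℝ) :
    ‖Complex.exp (2 * (((r:ℂ) * ω) ^ 3 / 3 + t * ((r:ℂ) * ω) / 2))‖
      = Real.exp (-2 * r ^ 3 / 3 + (t * ω).re * r) := by
  rw [exp_arg_eq hω, Complex.norm_exp]
  congr 1
  simp [Complex.add_re, Complex.re_ofReal_mul, ← Complex.ofReal_pow]
  ring

lemma norm_eval_le (P : Polynomial ℂ) (hω : ω ^ 3 = -1) {r : ℝ} (hr : 0 ≤ r) :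
    ‖P.eval ((r:ℂ) * ω)‖ ≤ ∑ i ∈ Finset.range (P.natDegree + 1), ‖P.coeff i‖ * r ^ i := by
  conv_lhs => rw [Polynomial.eval_eq_sum_range]
  refine (norm_sum_le _ _).trans ?_
  apply Finset.sum_le_sum
  intro i _
  rw [norm_mul, norm_pow, norm_mul, norm_om hω, Complex.norm_real, Real.norm_eq_abs,
    _root_.abs_of_nonneg hr, mul_one]

lemma poly_ray_norm_bound (P : Polynomial ℂ) (hω : ω ^ 3 = -1) {r : ℝ} (hr : 0 ≤ r) :
    ‖P.eval ((r:ℂ) * ω) * Complex.exp (2 * (((r:ℂ) * ω) ^ 3 / 3 + t * ((r:ℂ) * ω) / 2))‖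
      ≤ ∑ i ∈ Finset.range (P.natDegree + 1),
          ‖P.coeff i‖ * (r ^ i * Real.exp (-2 * r ^ 3 / 3 + (t * ω).re * r)) := by
  rw [norm_mul, norm_exp_eq hω]
  have h1 := norm_eval_le P hω hr
  calc ‖P.eval ((r:ℂ) * ω)‖ * Real.exp (-2 * r ^ 3 / 3 + (t * ω).re * r)
      ≤ (∑ i ∈ Finset.range (P.natDegree + 1), ‖P.coeff i‖ * r ^ i) *
          Real.exp (-2 * r ^ 3 / 3 + (t * ω).re * r) :=
        mul_le_mul_of_nonneg_right h1 (Real.exp_pos _).le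
    _ = _ := by rw [Finset.sum_mul]; apply Finset.sum_congr rfl; intros; ring

lemma poly_ray_continuous (P : Polynomial ℂ) :
    Continuous (fun r : ℝ => P.eval ((r:ℂ) * ω)
      * Complex.exp (2 * (((r:ℂ) * ω) ^ 3 / 3 + t * ((r:ℂ) * ω) / 2))) := by
  have h1 : Continuous (fun r : ℝ => (r:ℂ) * ω) := by continuity
  exact (P.continuous.comp h1).mul
    (Complex.continuous_exp.comp (by continuity))

lemma poly_ray_integrable (P : Polynomial ℂ) (hω : ω ^ 3 = -1) :
    IntegrableOn (fun r : ℝ => P.eval ((r:ℂ) * ω)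
      * Complex.exp (2 * (((r:ℂ) * ω) ^ 3 / 3 + t * ((r:ℂ) * ω) / 2))) (Ioi 0) := by
  refine Integrable.mono' (g := fun r : ℝ => ∑ i ∈ Finset.range (P.natDegree + 1),
      ‖P.coeff i‖ * (r ^ i * Real.exp (-2 * r ^ 3 / 3 + (t * ω).re * r))) ?_ ?_ ?_
  · apply integrable_finset_sum
    intro i _
    exact (core_integrable i ((t * ω).re)).const_mul _
  · exact (poly_ray_continuous P).aestronglyMeasurable.restrict
  · refine (ae_restrict_iff' measurableSet_Ioi).2 (Filter.Eventually.of_forall ?_)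
    intro r hr
    exact poly_ray_norm_bound P hω (le_of_lt hr)

lemma poly_ray_tendsto (P : Polynomial ℂ) (hω : ω ^ 3 = -1) :
    Tendsto (fun r : ℝ => P.eval ((r:ℂ) * ω)
      * Complex.exp (2 * (((r:ℂ) * ω) ^ 3 / 3 + t * ((r:ℂ) * ω) / 2))) atTop (nhds 0) := by
  refine squeeze_zero_norm' (a := fun r : ℝ => ∑ i ∈ Finset.range (P.natDegree + 1),
      ‖P.coeff i‖ * (r ^ i * Real.exp (-2 * r ^ 3 / 3 + (t * ω).re * r))) ?_ ?_
  · filter_upwards [eventually_ge_atTop (0:ℝ)] with r hr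
    exact poly_ray_norm_bound P hω hr
  · have : Tendsto (fun r : ℝ => ∑ i ∈ Finset.range (P.natDegree + 1),
        ‖P.coeff i‖ * (r ^ i * Real.exp (-2 * r ^ 3 / 3 + (t * ω).re * r))) atTop
        (nhds (∑ i ∈ Finset.range (P.natDegree + 1), ‖P.coeff i‖ * 0)) := by
      apply tendsto_finset_sum
      intro i _
      exact (core_tendsto i ((t * ω).re)).const_mul _
    simpa using this

end QP

namespace QP

variable {ω t : ℂ}

lemma hasDerivAt_inner (w : ℂ) :
    HasDerivAt (fun w : ℂ => 2 * (w ^ 3 / 3 + t * w / 2)) (2 * w ^ 2 + t) w := by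
  have h1 : HasDerivAt (fun w : ℂ => w ^ 3 / 3 + t * w / 2) (w ^ 2 + t / 2) w := by
    have hp : HasDerivAt (fun w : ℂ => w ^ 3 / 3) ((3:ℕ) * w ^ 2 / 3) w :=
      (hasDerivAt_pow 3 w).div_const 3
    have hl : HasDerivAt (fun w : ℂ => t * w / 2) (t / 2) w := by
      simpa using (((hasDerivAt_id w).const_mul t).div_const 2)
    refine (hp.add hl).congr_deriv ?_
    push_cast; ring
  have := h1.const_mul 2
  refine this.congr_deriv ?_
  ring

lemma hasDerivAt_exp2 (w : ℂ) :
    HasDerivAt (fun w : ℂ => Complex.exp (2 * (w ^ 3 / 3 + t * w / 2)))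
      ((2 * w ^ 2 + t) * Complex.exp (2 * (w ^ 3 / 3 + t * w / 2))) w := by
  have := (hasDerivAt_inner (t := t) w).cexp
  simpa [mul_comm] using this

lemma hasDerivAt_poly_exp (q : Polynomial ℂ) (w : ℂ) :
    HasDerivAt (fun w : ℂ => q.eval w * Complex.exp (2 * (w ^ 3 / 3 + t * w / 2)))
      ((q.derivative + (2 * Polynomial.X ^ 2 + Polynomial.C t) * q).eval w
        * Complex.exp (2 * (w ^ 3 / 3 + t * w / 2))) w := by
  have := (q.hasDerivAt w).mul (hasDerivAt_exp2 (t := t) w)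
  refine this.congr_deriv ?_
  simp [Polynomial.eval_add, Polynomial.eval_mul]
  ring

lemma ray_hasDerivAt (q : Polynomial ℂ) (r : ℝ) :
    HasDerivAt (fun r : ℝ => q.eval ((r:ℂ) * ω)
        * Complex.exp (2 * (((r:ℂ) * ω) ^ 3 / 3 + t * ((r:ℂ) * ω) / 2)))
      (ω * ((q.derivative + (2 * Polynomial.X ^ 2 + Polynomial.C t) * q).eval ((r:ℂ) * ω)
        * Complex.exp (2 * (((r:ℂ) * ω) ^ 3 / 3 + t * ((r:ℂ) * ω) / 2)))) r := by
  have hmul : HasDerivAt (fun w : ℂ => w * ω) ω ((r:ℂ)) := by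
    simpa using (hasDerivAt_id ((r:ℂ))).mul_const ω
  have hcomp := HasDerivAt.comp ((r:ℂ))
    (hasDerivAt_poly_exp (t := t) q ((r:ℂ) * ω)) hmul
  have h2 := hcomp.comp_ofReal
  simp only [Function.comp] at h2
  convert h2 using 1
  ring

lemma ray_ftc (q : Polynomial ℂ) (hω : ω ^ 3 = -1) :
    ω * ∫ r in Ioi (0:ℝ),
        (q.derivative + (2 * Polynomial.X ^ 2 + Polynomial.C t) * q).eval ((r:ℂ) * ω)
          * Complex.exp (2 * (((r:ℂ) * ω) ^ 3 / 3 + t * ((r:ℂ) * ω) / 2))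
      = - q.eval 0 := by
  have hint : IntegrableOn (fun r : ℝ =>
      ω * ((q.derivative + (2 * Polynomial.X ^ 2 + Polynomial.C t) * q).eval ((r:ℂ) * ω)
        * Complex.exp (2 * (((r:ℂ) * ω) ^ 3 / 3 + t * ((r:ℂ) * ω) / 2)))) (Ioi 0) :=
    (poly_ray_integrable _ hω).const_mul ω
  have hftc := integral_Ioi_of_hasDerivAt_of_tendsto'
    (f := fun r : ℝ => q.eval ((r:ℂ) * ω)
        * Complex.exp (2 * (((r:ℂ) * ω) ^ 3 / 3 + t * ((r:ℂ) * ω) / 2)))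
    (fun x _ => ray_hasDerivAt (ω := ω) (t := t) q x) hint (poly_ray_tendsto q hω)
  rw [MeasureTheory.integral_const_mul] at hftc
  rw [hftc]
  norm_num

end QP

namespace QP

noncomputable def Mint (ω : ℂ) (m : ℕ) (t : ℂ) : ℂ :=
  ω * ∫ r in Ioi (0:ℝ), ((r:ℂ) * ω) ^ m
    * Complex.exp (2 * (((r:ℂ) * ω) ^ 3 / 3 + t * ((r:ℂ) * ω) / 2))

variable {ω t : ℂ}

lemma mint_integrable (hω : ω ^ 3 = -1) (m : ℕ) (t : ℂ) :
    IntegrableOn (fun r : ℝ => ((r:ℂ) * ω) ^ m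
      * Complex.exp (2 * (((r:ℂ) * ω) ^ 3 / 3 + t * ((r:ℂ) * ω) / 2))) (Ioi 0) := by
  have := poly_ray_integrable (ω := ω) (t := t) (Polynomial.X ^ m) hω
  simpa using this

lemma mint_continuous (m : ℕ) (t : ℂ) :
    Continuous (fun r : ℝ => ((r:ℂ) * ω) ^ m
      * Complex.exp (2 * (((r:ℂ) * ω) ^ 3 / 3 + t * ((r:ℂ) * ω) / 2))) := by
  have := poly_ray_continuous (ω := ω) (t := t) (Polynomial.X ^ m)
  simpa using this

lemma hasDerivAt_mint (hω : ω ^ 3 = -1) (m : ℕ) (t₀ : ℂ) :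
    HasDerivAt (fun t => Mint ω m t) (Mint ω (m+1) t₀) t₀ := by
  have key := hasDerivAt_integral_of_dominated_loc_of_deriv_le
    (μ := volume.restrict (Ioi (0:ℝ))) (x₀ := t₀) (s := Metric.ball t₀ 1) (Metric.ball_mem_nhds t₀ one_pos)
    (F := fun t r => ((r:ℂ) * ω) ^ m
      * Complex.exp (2 * (((r:ℂ) * ω) ^ 3 / 3 + t * ((r:ℂ) * ω) / 2)))
    (F' := fun t r => ((r:ℂ) * ω) ^ (m+1)
      * Complex.exp (2 * (((r:ℂ) * ω) ^ 3 / 3 + t * ((r:ℂ) * ω) / 2)))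
    (bound := fun r => r ^ (m+1) * Real.exp (-2 * r ^ 3 / 3 + (‖t₀‖ + 1) * r))
    (Filter.Eventually.of_forall fun x => (mint_continuous m x).aestronglyMeasurable.restrict)
    (mint_integrable hω m t₀)
    ((mint_continuous (m+1) t₀).aestronglyMeasurable.restrict)
    ?_ (core_integrable (m+1) (‖t₀‖ + 1))
    ?_
  · have h := key.2
    have := h.const_mul ω
    simpa [Mint] using this
  · refine (ae_restrict_iff' measurableSet_Ioi).2 (Filter.Eventually.of_forall ?_)
    intro r hr x hx
    rw [norm_mul, norm_pow, norm_mul, norm_om hω, Complex.norm_real, Real.norm_eq_abs,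
      _root_.abs_of_nonneg (le_of_lt hr), mul_one, norm_exp_eq hω]
    apply mul_le_mul_of_nonneg_left _ (pow_nonneg (le_of_lt (mem_Ioi.1 hr)) _)
    apply Real.exp_le_exp.2
    have hxr : (x * ω).re ≤ ‖t₀‖ + 1 := by
      calc (x * ω).re ≤ ‖x * ω‖ := Complex.re_le_norm _
        _ = ‖x‖ := by rw [norm_mul, norm_om hω, mul_one]
        _ ≤ ‖t₀‖ + 1 := by
            have := mem_ball_iff_norm.1 hx
            have h2 : ‖x‖ - ‖t₀‖ ≤ ‖x - t₀‖ := norm_sub_norm_le x t₀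
            linarith
    nlinarith [le_of_lt (mem_Ioi.1 hr)]
  · refine (ae_restrict_iff' measurableSet_Ioi).2 (Filter.Eventually.of_forall ?_)
    intro r _ x _
    set b : ℂ := (r:ℂ) * ω
    have h1 : HasDerivAt (fun t : ℂ => 2 * (b ^ 3 / 3 + t * b / 2)) b x := by
      have := ((((hasDerivAt_id x).mul_const b).div_const 2).const_add (b ^ 3 / 3)).const_mul 2
      refine this.congr_deriv ?_
      ring
    have := (h1.cexp).const_mul (b ^ m)
    refine this.congr_deriv ?_
    ring

lemma moment_rel (hω : ω ^ 3 = -1) (t : ℂ) :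
    2 * Mint ω 2 t + t * Mint ω 0 t = -1 := by
  have h := ray_ftc (ω := ω) (t := t) 1 hω
  have heval : ∀ r : ℝ,
      (Polynomial.derivative (1:Polynomial ℂ)
        + (2 * Polynomial.X ^ 2 + Polynomial.C t) * 1).eval ((r:ℂ) * ω)
      = 2 * ((r:ℂ) * ω) ^ 2 + t := by intro r; simp
  have hsplit : (∫ r in Ioi (0:ℝ),
      (Polynomial.derivative (1:Polynomial ℂ)
        + (2 * Polynomial.X ^ 2 + Polynomial.C t) * 1).eval ((r:ℂ) * ω)
        * Complex.exp (2 * (((r:ℂ) * ω) ^ 3 / 3 + t * ((r:ℂ) * ω) / 2)))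
      = 2 * (∫ r in Ioi (0:ℝ), ((r:ℂ) * ω) ^ 2
          * Complex.exp (2 * (((r:ℂ) * ω) ^ 3 / 3 + t * ((r:ℂ) * ω) / 2)))
        + t * (∫ r in Ioi (0:ℝ), ((r:ℂ) * ω) ^ 0
          * Complex.exp (2 * (((r:ℂ) * ω) ^ 3 / 3 + t * ((r:ℂ) * ω) / 2))) := by
    rw [← MeasureTheory.integral_const_mul, ← MeasureTheory.integral_const_mul,
      ← MeasureTheory.integral_add (((mint_integrable hω 2 t)).const_mul 2)
        (((mint_integrable hω 0 t)).const_mul t)]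
    apply MeasureTheory.setIntegral_congr_fun measurableSet_Ioi
    intro r _
    simp only [heval r, pow_zero, one_mul]
    ring
  rw [hsplit] at h
  simp only [Mint]
  rw [Polynomial.eval_one] at h
  rw [mul_add, mul_comm (ω) (2 * _), mul_comm (ω) (t * _)] at h
  calc 2 * (ω * ∫ r in Ioi (0:ℝ), ((r:ℂ) * ω) ^ 2
          * Complex.exp (2 * (((r:ℂ) * ω) ^ 3 / 3 + t * ((r:ℂ) * ω) / 2)))
        + t * (ω * ∫ r in Ioi (0:ℝ), ((r:ℂ) * ω) ^ 0
          * Complex.exp (2 * (((r:ℂ) * ω) ^ 3 / 3 + t * ((r:ℂ) * ω) / 2)))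
      = 2 * (∫ r in Ioi (0:ℝ), ((r:ℂ) * ω) ^ 2
          * Complex.exp (2 * (((r:ℂ) * ω) ^ 3 / 3 + t * ((r:ℂ) * ω) / 2))) * ω
        + t * (∫ r in Ioi (0:ℝ), ((r:ℂ) * ω) ^ 0
          * Complex.exp (2 * (((r:ℂ) * ω) ^ 3 / 3 + t * ((r:ℂ) * ω) / 2))) * ω := by ring
    _ = -1 := h

end QP

namespace QP

variable {ω t : ℂ}

lemma core0_integrable (m : ℕ) :
    IntegrableOn (fun r : ℝ => r ^ m * Real.exp (-2 * r ^ 3 / 3)) (Ioi 0) := by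
  have := core_integrable m 0
  simpa using this

lemma mint_zero (hω : ω ^ 3 = -1) (m : ℕ) :
    Mint ω m 0 = ω ^ (m+1)
      * Complex.ofReal (∫ r in Ioi (0:ℝ), r ^ m * Real.exp (-2 * r ^ 3 / 3)) := by
  unfold Mint
  have hcongr : ∀ r ∈ Ioi (0:ℝ), ((r:ℂ) * ω) ^ m
      * Complex.exp (2 * (((r:ℂ) * ω) ^ 3 / 3 + (0:ℂ) * ((r:ℂ) * ω) / 2))
      = ω ^ m * (((r ^ m * Real.exp (-2 * r ^ 3 / 3) : ℝ)) : ℂ) := by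
    intro r _
    have h1 : (2:ℂ) * (((r:ℂ) * ω) ^ 3 / 3 + (0:ℂ) * ((r:ℂ) * ω) / 2)
        = ((-2 * r ^ 3 / 3 : ℝ) : ℂ) := by
      rw [exp_arg_eq hω r]; simp
    rw [h1, ← Complex.ofReal_exp]
    push_cast
    ring
  rw [MeasureTheory.setIntegral_congr_fun measurableSet_Ioi hcongr,
    MeasureTheory.integral_const_mul]
  rw [show (∫ a in Ioi (0:ℝ), ((a ^ m * Real.exp (-2 * a ^ 3 / 3) : ℝ) : ℂ))
      = Complex.ofReal (∫ a in Ioi (0:ℝ), a ^ m * Real.exp (-2 * a ^ 3 / 3)) from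
    integral_ofReal]
  ring

lemma core0_pos (m : ℕ) :
    0 < ∫ r in Ioi (0:ℝ), r ^ m * Real.exp (-2 * r ^ 3 / 3) := by
  rw [MeasureTheory.setIntegral_pos_iff_support_of_nonneg_ae ?_ (core0_integrable m)]
  · apply lt_of_lt_of_le _ (measure_mono (?_ :
      Ioi (0:ℝ) ⊆ Function.support (fun r : ℝ => r ^ m * Real.exp (-2 * r ^ 3 / 3)) ∩ Ioi 0))
    · rw [Real.volume_Ioi]; exact ENNReal.zero_lt_top
    · intro r hr
      refine ⟨?_, hr⟩
      have hr0 : (0:ℝ) < r := hr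
      simp only [Function.mem_support]
      positivity
  · refine (ae_restrict_iff' measurableSet_Ioi).2 (Filter.Eventually.of_forall ?_)
    intro r hr
    have hr0 : (0:ℝ) < r := hr
    positivity

end QP

namespace QP

open Polynomial

lemma exists_decomp (t : ℂ) (f : Polynomial ℂ) :
    ∃ (q : Polynomial ℂ) (a b : ℂ),
      f = derivative q + (2 * X ^ 2 + C t) * q + C a + C b * X := by
  generalize hN : f.natDegree = N
  induction N using Nat.strong_induction_on generalizing f with
  | _ N ih =>
    by_cases hle : f.natDegree ≤ 1
    · refine ⟨0, f.coeff 0, f.coeff 1, ?_⟩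
      have h01 := Polynomial.eq_X_add_C_of_natDegree_le_one hle
      simp only [derivative_zero, mul_zero, add_zero, zero_add]
      conv_lhs => rw [h01]
      ring
    · push_neg at hle
      set d := f.natDegree with hd
      have hd2 : 2 ≤ d := hle
      set c : ℂ := f.leadingCoeff / 2 with hc
      set h : Polynomial ℂ := C c * X ^ (d - 2) with hh
      set g : Polynomial ℂ := f - (derivative h + (2 * X ^ 2 + C t) * h) with hg
      have hLhdeg : (derivative h + (2 * X ^ 2 + C t) * h).natDegree ≤ d := by
        apply le_trans (natDegree_add_le _ _)
        apply max_le
        · apply le_trans (natDegree_derivative_le h)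
          apply le_trans (Nat.sub_le _ 1)
          apply le_trans (natDegree_C_mul_le _ _)
          simp only [natDegree_X_pow]
          omega
        · apply le_trans (natDegree_mul_le)
          have h1 : (2 * X ^ 2 + C t : Polynomial ℂ).natDegree ≤ 2 := by
            apply le_trans (natDegree_add_le _ _)
            apply max_le
            · apply le_trans (natDegree_mul_le)
              simp [natDegree_X_pow]
            · simp [natDegree_C]
          have h2 : h.natDegree ≤ d - 2 := by
            apply le_trans (natDegree_C_mul_le _ _)
            simp [natDegree_X_pow]
          omega
      have hcoeffd : (derivative h + (2 * X ^ 2 + C t) * h).coeff d = f.coeff d := by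
        rw [coeff_add]
        have hder : (derivative h).coeff d = 0 := by
          apply coeff_eq_zero_of_natDegree_lt
          apply lt_of_le_of_lt (natDegree_derivative_le h)
          have : h.natDegree ≤ d - 2 := by
            apply le_trans (natDegree_C_mul_le _ _); simp [natDegree_X_pow]
          omega
        rw [hder, zero_add]
        have hexp : (2 * X ^ 2 + C t) * h = C (2 * c) * X ^ d + C (t * c) * X ^ (d - 2) := by
          rw [hh]
          have hxp : (X : Polynomial ℂ) ^ 2 * (C c * X ^ (d-2)) = C c * X ^ d := by
            rw [mul_comm, mul_assoc, ← pow_add]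
            congr 2
            omega
          rw [add_mul, mul_assoc, hxp]
          simp only [C_mul, map_ofNat]
          ring
        rw [hexp, coeff_add, coeff_C_mul, coeff_C_mul, coeff_X_pow, coeff_X_pow]
        have hne : ¬(d = d - 2) := by omega
        simp only [if_pos rfl, if_neg hne, if_true, mul_one, mul_zero, add_zero]
        have hlc : f.coeff d = f.leadingCoeff := rfl
        rw [hc, hlc]; ring
      have hgdeg : g.natDegree < d := by
        by_cases hg0 : g = 0
        · rw [hg0]; simp only [natDegree_zero]; omega
        · rw [Polynomial.natDegree_lt_iff_degree_lt hg0,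
            Polynomial.degree_lt_iff_coeff_zero]
          intro m hm
          have hm' : d ≤ m := by exact_mod_cast hm
          rw [hg, coeff_sub]
          rcases eq_or_lt_of_le hm' with hmd | hmd
          · rw [hmd] at hcoeffd
            rw [hcoeffd]; ring
          · rw [coeff_eq_zero_of_natDegree_lt hmd,
              coeff_eq_zero_of_natDegree_lt (lt_of_le_of_lt hLhdeg hmd)]
            ring
      obtain ⟨q1, a, b, hq1⟩ := ih g.natDegree (by omega) g rfl
      refine ⟨q1 + h, a, b, ?_⟩
      have : f = g + (derivative h + (2 * X ^ 2 + C t) * h) := by rw [hg]; ring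
      rw [this, hq1, derivative_add]
      ring

end QP

namespace QP

lemma rayDir_cube {k : ℕ} (hk : Odd k) : rayDir k ^ 3 = -1 := by
  unfold rayDir
  rw [← Complex.exp_nat_mul]
  have h1 : ((3:ℕ):ℂ) * ((k : ℂ) * Real.pi * Complex.I / 3) = (k:ℕ) * (Real.pi * Complex.I) := by
    push_cast; ring
  rw [h1, Complex.exp_nat_mul, Complex.exp_pi_mul_I, Odd.neg_one_pow hk]

lemma rayDir_one : rayDir 1 = (1/2 : ℂ) + ((Real.sqrt 3 : ℝ) : ℂ)/2 * Complex.I := by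
  unfold rayDir
  have h1 : ((1:ℕ) : ℂ) * Real.pi * Complex.I / 3 = ((Real.pi/3 : ℝ) : ℂ) * Complex.I := by
    push_cast; ring
  rw [h1, Complex.exp_mul_I, ← Complex.ofReal_cos, ← Complex.ofReal_sin,
    Real.cos_pi_div_three, Real.sin_pi_div_three]
  push_cast; ring

lemma rayDir_three : rayDir 3 = -1 := by
  unfold rayDir
  have h1 : ((3:ℕ) : ℂ) * Real.pi * Complex.I / 3 = Real.pi * Complex.I := by
    push_cast; ring
  rw [h1, Complex.exp_pi_mul_I]

lemma rayDir_five : rayDir 5 = (1/2 : ℂ) - ((Real.sqrt 3 : ℝ) : ℂ)/2 * Complex.I := by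
  unfold rayDir
  have h1 : ((5:ℕ) : ℂ) * Real.pi * Complex.I / 3
      = 2 * Real.pi * Complex.I + ((-(Real.pi/3) : ℝ) : ℂ) * Complex.I := by
    push_cast; ring
  rw [h1, Complex.exp_add, Complex.exp_two_pi_mul_I, one_mul, Complex.exp_mul_I,
    ← Complex.ofReal_cos, ← Complex.ofReal_sin,
    Real.cos_neg, Real.sin_neg, Real.cos_pi_div_three, Real.sin_pi_div_three]
  push_cast; ring

end QP

namespace QP

noncomputable def Uf (ω ω' : ℂ) (m : ℕ) (t : ℂ) : ℂ := Mint ω m t - Mint ω' m t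

noncomputable def Wf (t : ℂ) : ℂ :=
  Uf (rayDir 3) (rayDir 1) 0 t * Uf (rayDir 3) (rayDir 5) 1 t
    - Uf (rayDir 3) (rayDir 5) 0 t * Uf (rayDir 3) (rayDir 1) 1 t

lemma h1cube : rayDir 1 ^ 3 = -1 := rayDir_cube ⟨0, by norm_num⟩
lemma h3cube : rayDir 3 ^ 3 = -1 := rayDir_cube ⟨1, by norm_num⟩
lemma h5cube : rayDir 5 ^ 3 = -1 := rayDir_cube ⟨2, by norm_num⟩

lemma hasDerivAt_U {ω ω' : ℂ} (hω : ω ^ 3 = -1) (hω' : ω' ^ 3 = -1) (m : ℕ) (t : ℂ) :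
    HasDerivAt (Uf ω ω' m) (Uf ω ω' (m+1) t) t :=
  (hasDerivAt_mint hω m t).sub (hasDerivAt_mint hω' m t)

lemma U_rel {ω ω' : ℂ} (hω : ω ^ 3 = -1) (hω' : ω' ^ 3 = -1) (t : ℂ) :
    2 * Uf ω ω' 2 t + t * Uf ω ω' 0 t = 0 := by
  have hr1 := moment_rel hω t
  have hr2 := moment_rel hω' t
  unfold Uf
  linear_combination hr1 - hr2

lemma hasDerivAt_W (t : ℂ) : HasDerivAt Wf 0 t := by
  have hD := ((hasDerivAt_U h3cube h1cube 0 t).mul (hasDerivAt_U h3cube h5cube 1 t)).sub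
    ((hasDerivAt_U h3cube h5cube 0 t).mul (hasDerivAt_U h3cube h1cube 1 t))
  refine hD.congr_deriv ?_
  simp only [Nat.reduceAdd]
  have r1 := U_rel h3cube h1cube t
  have r2 := U_rel h3cube h5cube t
  linear_combination (Uf (rayDir 3) (rayDir 1) 0 t / 2) * r2
    - (Uf (rayDir 3) (rayDir 5) 0 t / 2) * r1

lemma W_const (t : ℂ) : Wf t = Wf 0 :=
  is_const_of_deriv_eq_zero (fun x => (hasDerivAt_W x).differentiableAt)
    (fun x => (hasDerivAt_W x).deriv) t 0

lemma W_zero_ne : Wf 0 ≠ 0 := by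
  have hs : (((Real.sqrt 3 : ℝ)) : ℂ) ^ 2 = 3 := by
    rw [← Complex.ofReal_pow, Real.sq_sqrt (by norm_num : (3:ℝ) ≥ 0)]
    norm_num
  have hI : Complex.I ^ 2 = -1 := Complex.I_sq
  set s : ℂ := (((Real.sqrt 3 : ℝ)) : ℂ) with hsdef
  set c0 : ℝ := ∫ r in Ioi (0:ℝ), r ^ 0 * Real.exp (-2 * r ^ 3 / 3) with hc0
  set c1 : ℝ := ∫ r in Ioi (0:ℝ), r ^ 1 * Real.exp (-2 * r ^ 3 / 3) with hc1
  have hW : Wf 0 = (c0 : ℂ) * (c1 : ℂ) * (-3 * s * Complex.I) := by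
    unfold Wf Uf
    rw [mint_zero h3cube 0, mint_zero h1cube 0, mint_zero h5cube 0,
      mint_zero h3cube 1, mint_zero h1cube 1, mint_zero h5cube 1,
      rayDir_one, rayDir_three, rayDir_five]
    rw [← hc0, ← hc1, ← hsdef]
    linear_combination ((c0:ℂ) * (c1:ℂ)) * ((s * Complex.I * Complex.I ^ 2 / 4) * hs
      + (3 * s * Complex.I / 4) * hI)
  rw [hW]
  have h0 : (c0 : ℂ) ≠ 0 :=
    Complex.ofReal_ne_zero.2 (ne_of_gt (by rw [hc0]; exact core0_pos 0))
  have h1 : (c1 : ℂ) ≠ 0 :=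
    Complex.ofReal_ne_zero.2 (ne_of_gt (by rw [hc1]; exact core0_pos 1))
  have hsne : s ≠ 0 := by
    rw [hsdef]
    exact Complex.ofReal_ne_zero.2 (ne_of_gt (Real.sqrt_pos.2 (by norm_num : (0:ℝ) < 3)))
  apply mul_ne_zero (mul_ne_zero h0 h1)
  apply mul_ne_zero (mul_ne_zero (by norm_num) hsne) Complex.I_ne_zero

lemma W_ne (t : ℂ) : Wf t ≠ 0 := by rw [W_const t]; exact W_zero_ne

end QP

namespace QP

open Polynomial

lemma ray_value {ω : ℂ} (hω : ω ^ 3 = -1) (t : ℂ) (p q0 : Polynomial ℂ) (a b : ℂ)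
    (hdec : p ^ 2 = derivative q0 + (2 * X ^ 2 + C t) * q0 + C a + C b * X) :
    (ω * ∫ r in Ioi (0:ℝ),
        (p.eval ((r:ℂ) * ω) * Complex.exp (((r:ℂ) * ω) ^ 3 / 3 + t * ((r:ℂ) * ω) / 2)) ^ 2)
      = - q0.eval 0 + a * Mint ω 0 t + b * Mint ω 1 t := by
  have hcong : ∀ r : ℝ,
      (p.eval ((r:ℂ) * ω) * Complex.exp (((r:ℂ) * ω) ^ 3 / 3 + t * ((r:ℂ) * ω) / 2)) ^ 2
      = (derivative q0 + (2 * X ^ 2 + C t) * q0).eval ((r:ℂ) * ω)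
            * Complex.exp (2 * (((r:ℂ) * ω) ^ 3 / 3 + t * ((r:ℂ) * ω) / 2))
        + a * (((r:ℂ) * ω) ^ 0
            * Complex.exp (2 * (((r:ℂ) * ω) ^ 3 / 3 + t * ((r:ℂ) * ω) / 2)))
        + b * (((r:ℂ) * ω) ^ 1
            * Complex.exp (2 * (((r:ℂ) * ω) ^ 3 / 3 + t * ((r:ℂ) * ω) / 2))) := by
    intro r
    set x : ℂ := (r:ℂ) * ω
    have hexpsq : Complex.exp (x ^ 3 / 3 + t * x / 2) ^ 2
        = Complex.exp (2 * (x ^ 3 / 3 + t * x / 2)) := by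
      rw [← Complex.exp_nat_mul]
      norm_num
    have hps : (p.eval x) ^ 2 = (p ^ 2).eval x := by simp
    rw [mul_pow, hexpsq, hps, hdec]
    simp only [eval_add, eval_mul, eval_C, eval_X, eval_pow, pow_zero, pow_one]
    ring
  rw [MeasureTheory.setIntegral_congr_fun measurableSet_Ioi (fun r _ => hcong r)]
  have hA := poly_ray_integrable (ω := ω) (t := t) (derivative q0 + (2 * X ^ 2 + C t) * q0) hω
  have hB := (mint_integrable hω 0 t).const_mul a
  have hC := (mint_integrable hω 1 t).const_mul b
  have hsplit : (∫ r in Ioi (0:ℝ),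
      ((derivative q0 + (2 * X ^ 2 + C t) * q0).eval ((r:ℂ) * ω)
            * Complex.exp (2 * (((r:ℂ) * ω) ^ 3 / 3 + t * ((r:ℂ) * ω) / 2))
        + a * (((r:ℂ) * ω) ^ 0
            * Complex.exp (2 * (((r:ℂ) * ω) ^ 3 / 3 + t * ((r:ℂ) * ω) / 2)))
        + b * (((r:ℂ) * ω) ^ 1
            * Complex.exp (2 * (((r:ℂ) * ω) ^ 3 / 3 + t * ((r:ℂ) * ω) / 2)))))
      = (∫ r in Ioi (0:ℝ), (derivative q0 + (2 * X ^ 2 + C t) * q0).eval ((r:ℂ) * ω)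
            * Complex.exp (2 * (((r:ℂ) * ω) ^ 3 / 3 + t * ((r:ℂ) * ω) / 2)))
        + (∫ r in Ioi (0:ℝ), a * (((r:ℂ) * ω) ^ 0
            * Complex.exp (2 * (((r:ℂ) * ω) ^ 3 / 3 + t * ((r:ℂ) * ω) / 2))))
        + (∫ r in Ioi (0:ℝ), b * (((r:ℂ) * ω) ^ 1
            * Complex.exp (2 * (((r:ℂ) * ω) ^ 3 / 3 + t * ((r:ℂ) * ω) / 2)))) := by
    have hAB : Integrable (fun r : ℝ =>
        (derivative q0 + (2 * X ^ 2 + C t) * q0).eval ((r:ℂ) * ω)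
            * Complex.exp (2 * (((r:ℂ) * ω) ^ 3 / 3 + t * ((r:ℂ) * ω) / 2))
          + a * (((r:ℂ) * ω) ^ 0
            * Complex.exp (2 * (((r:ℂ) * ω) ^ 3 / 3 + t * ((r:ℂ) * ω) / 2))))
        (volume.restrict (Ioi 0)) := by exact hA.add hB
    rw [← MeasureTheory.integral_add hA hB, ← MeasureTheory.integral_add hAB hC]
  rw [hsplit, MeasureTheory.integral_const_mul a, MeasureTheory.integral_const_mul b]
  have hftc := ray_ftc (ω := ω) (t := t) q0 hω
  simp only [Mint]
  linear_combination hftc + (a * ω) * (rfl :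
      (∫ r in Ioi (0:ℝ), ((r:ℂ) * ω) ^ 0
        * Complex.exp (2 * (((r:ℂ) * ω) ^ 3 / 3 + t * ((r:ℂ) * ω) / 2)))
      = ∫ r in Ioi (0:ℝ), ((r:ℂ) * ω) ^ 0
        * Complex.exp (2 * (((r:ℂ) * ω) ^ 3 / 3 + t * ((r:ℂ) * ω) / 2)))

end QP

open QP

/-- under the repeated-eigenvalue condition, the antiderivative of
F² = (p·e^θ)² is again a quasi-polynomial: there is a polynomial q with
q' + (2x²+t)q = p², i.e. (q·e^{2θ})' = p²·e^{2θ}. -/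
theorem antiderivative_is_quasipolynomial
    (n : ℕ) (t lam : ℂ) (p : Polynomial ℂ) (hmonic : p.Monic) (hdeg : p.natDegree = n)
    (heq : ∀ x : ℂ, (p.derivative.derivative).eval x
        + (2 * x ^ 2 + t) * p.derivative.eval x
        - 2 * (n : ℂ) * x * p.eval x = lam * p.eval x)
    (h13 : rayIntegral 1 (fun x => (p.eval x * Complex.exp (x ^ 3 / 3 + t * x / 2)) ^ 2)
      = rayIntegral 3 (fun x => (p.eval x * Complex.exp (x ^ 3 / 3 + t * x / 2)) ^ 2))
    (h35 : rayIntegral 3 (fun x => (p.eval x * Complex.exp (x ^ 3 / 3 + t * x / 2)) ^ 2)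
      = rayIntegral 5 (fun x => (p.eval x * Complex.exp (x ^ 3 / 3 + t * x / 2)) ^ 2)) :
    ∃ q : Polynomial ℂ,
      (∀ x : ℂ, q.derivative.eval x + (2 * x ^ 2 + t) * q.eval x = (p.eval x) ^ 2) ∧
      (∀ x : ℂ, HasDerivAt (fun w => q.eval w * Complex.exp (2 * (w ^ 3 / 3 + t * w / 2)))
        ((p.eval x) ^ 2 * Complex.exp (2 * (x ^ 3 / 3 + t * x / 2))) x) := by
  obtain ⟨q0, a, b, hdec⟩ := exists_decomp t (p ^ 2)
  have hI1 : rayIntegral 1 (fun x => (p.eval x * Complex.exp (x ^ 3 / 3 + t * x / 2)) ^ 2)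
      = - q0.eval 0 + a * Mint (rayDir 1) 0 t + b * Mint (rayDir 1) 1 t :=
    ray_value h1cube t p q0 a b hdec
  have hI3 : rayIntegral 3 (fun x => (p.eval x * Complex.exp (x ^ 3 / 3 + t * x / 2)) ^ 2)
      = - q0.eval 0 + a * Mint (rayDir 3) 0 t + b * Mint (rayDir 3) 1 t :=
    ray_value h3cube t p q0 a b hdec
  have hI5 : rayIntegral 5 (fun x => (p.eval x * Complex.exp (x ^ 3 / 3 + t * x / 2)) ^ 2)
      = - q0.eval 0 + a * Mint (rayDir 5) 0 t + b * Mint (rayDir 5) 1 t :=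
    ray_value h5cube t p q0 a b hdec
  rw [hI1, hI3] at h13
  rw [hI3, hI5] at h35
  have eq1 : a * Uf (rayDir 3) (rayDir 1) 0 t + b * Uf (rayDir 3) (rayDir 1) 1 t = 0 := by
    unfold Uf
    linear_combination (-1 : ℂ) * h13
  have eq2 : a * Uf (rayDir 3) (rayDir 5) 0 t + b * Uf (rayDir 3) (rayDir 5) 1 t = 0 := by
    unfold Uf
    linear_combination h35
  have ha : a * Wf t = 0 := by
    unfold Wf
    linear_combination (Uf (rayDir 3) (rayDir 5) 1 t) * eq1
      - (Uf (rayDir 3) (rayDir 1) 1 t) * eq2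
  have hb : b * Wf t = 0 := by
    unfold Wf
    linear_combination (Uf (rayDir 3) (rayDir 1) 0 t) * eq2
      - (Uf (rayDir 3) (rayDir 5) 0 t) * eq1
  have ha0 : a = 0 := by
    rcases mul_eq_zero.1 ha with h | h
    · exact h
    · exact absurd h (W_ne t)
  have hb0 : b = 0 := by
    rcases mul_eq_zero.1 hb with h | h
    · exact h
    · exact absurd h (W_ne t)
  rw [ha0, hb0] at hdec
  simp only [Polynomial.C_0, add_zero, zero_mul] at hdec
  refine ⟨q0, ?_, ?_⟩
  · intro x
    have := congrArg (Polynomial.eval x) hdec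
    simp only [Polynomial.eval_add, Polynomial.eval_mul, Polynomial.eval_pow,
      Polynomial.eval_X, Polynomial.eval_C, Polynomial.eval_ofNat] at this
    linear_combination -this
  · intro x
    have hD := hasDerivAt_poly_exp (t := t) q0 x
    have heval : (Polynomial.derivative q0
        + (2 * Polynomial.X ^ 2 + Polynomial.C t) * q0).eval x = (p.eval x) ^ 2 := by
      rw [← hdec]
      simp
    rw [heval] at hD
    exact hD
end

section
/- Let U ⊆ ℂ be open, α ∈ ℂ, and let u, v, w : ℂ → ℂ be differentiable on U and satisfy, for all t ∈ U: u'(t) = u(t)² + w(t) + t/2, v'(t) = −u(t)·v(t), and w'(t) = −2·u(t)·w(t) + α − 1/2. Then u satisfies the second Painlevé equation with parameter α on U: u''(t) = 2·u(t)³ + t·u(t) + α for all t ∈ U. -/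
/-- the Jimbo–Miwa compatibility system for (u,v,w) implies that u
satisfies the second Painlevé equation u'' = 2u³ + t·u + α on U. -/
theorem system_implies_painleveII
    (U : Set ℂ) (hU : IsOpen U) (α : ℂ) (u v w : ℂ → ℂ)
    (hu : ∀ t ∈ U, HasDerivAt u ((u t) ^ 2 + w t + t / 2) t)
    (hv : ∀ t ∈ U, HasDerivAt v (-(u t) * v t) t)
    (hw : ∀ t ∈ U, HasDerivAt w (-2 * u t * w t + α - 1 / 2) t) :
    ∀ t ∈ U, deriv (deriv u) t = 2 * (u t) ^ 3 + t * u t + α := by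
  intro t ht
  have heq : deriv u =ᶠ[nhds t] (fun s => (u s) ^ 2 + w s + s / 2) := by
    filter_upwards [hU.mem_nhds ht] with s hs
    exact (hu s hs).deriv
  rw [heq.deriv_eq]
  have hderiv : HasDerivAt (fun s => (u s) ^ 2 + w s + s / 2)
      (2 * u t * ((u t) ^ 2 + w t + t / 2) + (-2 * u t * w t + α - 1 / 2) + 1 / 2) t := by
    have h1 : HasDerivAt (fun s => (u s) ^ 2) (2 * u t * ((u t) ^ 2 + w t + t / 2)) t := by
      have := ((hu t ht).fun_pow 2)
      simpa [mul_comm, mul_assoc, mul_left_comm] using this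
    have h2 : HasDerivAt (fun s : ℂ => s / 2) (1 / 2) t := by
      simpa using (hasDerivAt_id t).div_const 2
    exact (h1.add (hw t ht)).add h2
  rw [hderiv.deriv]
  ring
end
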